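/- arXiv:1407.2219 — 5 statements merged into one kernel-verified Lean document; each statement's English description precedes it below -/
import Mathlib

section
/- Let f : [0,1] → ℝ be continuously differentiable with f' Hölder continuous of exponent β−1 with constant L₀, where β ∈ (1,2]. Fix k ∈ ℕ and mid-bin points c_j = (j−1/2)/k. For j = 1,…,k−1 and x ∈ [c_j, c_{j+1}], letting w_j = ∫_{(j−1)/k}^{j/k} f dλ and p(x) = k(c_{j+1}−x)·k w_j + k(x−c_j)·k w_{j+1} (the linear interpolation of the scaled bin masses), one has |f(x) − p(x)| ≤ (3L₀/8) k^{−β}. -/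
open MeasureTheory intervalIntegral

set_option maxHeartbeats 1000000
open MeasureTheory intervalIntegral

lemma int_quad (p q r A B : ℝ) :
    ∫ s in A..B, (p*s^2 + q*s + r) = p*(B^3 - A^3)/3 + q*(B^2 - A^2)/2 + r*(B - A) := by
  have hd : ∀ s ∈ Set.uIcc A B, HasDerivAt (fun u : ℝ => p*u^3/3 + q*u^2/2 + r*u)
      (p*s^2 + q*s + r) s := by
    intro s _
    have h := (((hasDerivAt_pow 3 s).const_mul p).div_const 3).add
      ((((hasDerivAt_pow 2 s).const_mul q).div_const 2).add ((hasDerivAt_id s).const_mul r))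
    refine HasDerivAt.congr_deriv (h.congr_of_eventuallyEq (Filter.Eventually.of_forall fun u => ?_)) ?_
    · show p*u^3/3 + q*u^2/2 + r*u = p*u^3/3 + (q*u^2/2 + r * id u); simp [id]; ring
    · push_cast; ring
  rw [intervalIntegral.integral_eq_sub_of_hasDerivAt hd
    ((Continuous.intervalIntegrable (by fun_prop) A B))]
  ring

lemma tangent_rpow (γ c ρ : ℝ) (hγ0 : 0 < γ) (hγ1 : γ ≤ 1) (hc : 0 < c) (hρ : 0 ≤ ρ) :
    ρ ^ γ ≤ γ * c ^ (γ-1) * ρ + (1-γ) * c ^ γ := by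
  have h := Real.geom_mean_le_arith_mean2_weighted hγ0.le (by linarith : (0:ℝ) ≤ 1-γ)
    (div_nonneg hρ hc.le) zero_le_one (by ring)
  rw [Real.one_rpow, mul_one, mul_one] at h
  have hcγ : (0:ℝ) < c ^ γ := Real.rpow_pos_of_pos hc γ
  have h2 : (ρ/c) ^ γ * c ^ γ ≤ (γ * (ρ/c) + (1-γ)) * c ^ γ := by
    exact mul_le_mul_of_nonneg_right h hcγ.le
  rw [← Real.mul_rpow (div_nonneg hρ hc.le) hc.le, div_mul_cancel₀ _ hc.ne'] at h2
  calc ρ ^ γ ≤ (γ * (ρ/c) + (1-γ)) * c ^ γ := h2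
    _ = γ * (c ^ γ / c) * ρ + (1-γ) * c ^ γ := by field_simp
    _ = γ * c ^ (γ-1) * ρ + (1-γ) * c ^ γ := by rw [← Real.rpow_sub_one hc.ne']

lemma integral_poly_eq (c2 c1 c0 A B : ℝ) (g : ℝ → ℝ) (hg : ∀ s, g s = c2*s^2 + c1*s + c0) :
    ∫ s in A..B, g s = c2*(B^3 - A^3)/3 + c1*(B^2 - A^2)/2 + c0*(B - A) := by
  rw [intervalIntegral.integral_congr (g := fun s => c2*s^2 + c1*s + c0) (fun s _ => hg s)]
  exact int_quad c2 c1 c0 A B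

lemma int_comb (g1 g2 g3 : ℝ → ℝ) (A B c1 c2 c3 : ℝ)
    (h1 : IntervalIntegrable g1 volume A B) (h2 : IntervalIntegrable g2 volume A B)
    (h3 : IntervalIntegrable g3 volume A B) :
    ∫ v in A..B, (c1 * g1 v + c2 * g2 v + c3 * g3 v)
      = c1 * (∫ v in A..B, g1 v) + c2 * (∫ v in A..B, g2 v) + c3 * (∫ v in A..B, g3 v) := by
  rw [intervalIntegral.integral_add ((h1.const_mul c1).add (h2.const_mul c2)) (h3.const_mul c3),
      intervalIntegral.integral_add (h1.const_mul c1) (h2.const_mul c2),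
      intervalIntegral.integral_const_mul, intervalIntegral.integral_const_mul,
      intervalIntegral.integral_const_mul]

lemma polyMw (h t : ℝ) (hh : 0 < h) (ht0 : 0 ≤ t) (ht : t ≤ h/2) :
    (t + h/2) * ((h - t)^2/2) ≤ h/4*(h*h) := by
  nlinarith [mul_nonneg (mul_nonneg ht0 ht0) (by linarith : (0:ℝ) ≤ 3*h - 2*t)]

lemma core (f f' : ℝ → ℝ) (m h x q r : ℝ) (hh : 0 < h)
    (hx1 : m ≤ x) (hx2 : x ≤ m + h/2)
    (hderiv : ∀ s ∈ Set.Icc (m-h) (m+h), HasDerivAt f (f' s) s)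
    (hcont : ContinuousOn f' (Set.Icc (m-h) (m+h)))
    (hq : 0 ≤ q) (hr : 0 ≤ r)
    (hbound : ∀ u ∈ Set.Icc x (m+h), ∀ v ∈ Set.Icc (m-h) x, |f' u - f' v| ≤ q*(u-v) + r) :
    |f x - ((m + h/2 - x)/h * ((1/h) * ∫ s in (m-h)..m, f s)
          + (x - (m - h/2))/h * ((1/h) * ∫ s in m..(m+h), f s))| ≤ q*h^2/6 + r*h/4 := by
  have hh' : h ≠ 0 := hh.ne'
  have ham : m - h ≤ m := by linarith
  have hmb : m ≤ m + h := by linarith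
  have hxb : x ≤ m + h := by linarith
  have hax : m - h ≤ x := by linarith
  have hsub : ∀ {A B : ℝ}, m - h ≤ A → A ≤ B → B ≤ m + h →
      Set.uIcc A B ⊆ Set.Icc (m-h) (m+h) := by
    intro A B h1 h2 h3
    rw [Set.uIcc_of_le h2]; exact Set.Icc_subset_Icc h1 h3
  have hfc : ContinuousOn f (Set.Icc (m-h) (m+h)) :=
    fun s hs => ((hderiv s hs).continuousAt).continuousWithinAt
  have hfi : ∀ A B, m - h ≤ A → A ≤ B → B ≤ m + h → IntervalIntegrable f volume A B :=
    fun A B h1 h2 h3 => (hfc.mono (hsub h1 h2 h3)).intervalIntegrable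
  have hgi : ∀ (g : ℝ → ℝ), Continuous g → ∀ A B, m - h ≤ A → A ≤ B → B ≤ m + h →
      IntervalIntegrable (fun v => g v * f' v) volume A B :=
    fun g hg A B h1 h2 h3 =>
      ((hg.continuousOn).mul (hcont.mono (hsub h1 h2 h3))).intervalIntegrable
  have hf'i : ∀ A B, m - h ≤ A → A ≤ B → B ≤ m + h → IntervalIntegrable f' volume A B :=
    fun A B h1 h2 h3 => (hcont.mono (hsub h1 h2 h3)).intervalIntegrable
  set L1 := (m + h/2 - x)/h with hL1
  set L2 := (x - (m - h/2))/h with hL2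
  have hL1n : 0 ≤ L1 := by rw [hL1]; apply div_nonneg _ hh.le; linarith
  have hL2n : 0 ≤ L2 := by
    rw [hL2]; apply div_nonneg _ hh.le; linarith
  have hL2le : L2 ≤ 1 := by rw [hL2, div_le_one hh]; linarith
  have hsum : L1 + L2 = 1 := by rw [hL1, hL2]; field_simp; ring
  set I1 := ∫ s in (m-h)..m, f s with hI1
  set I2 := ∫ s in m..(m+h), f s with hI2
  set J1 := ∫ s in (m-h)..m, (s-(m-h)) * f' s with hJ1d
  set Jm := ∫ s in m..x, f' s with hJmd
  set J2x := ∫ s in m..x, ((m+h)-s) * f' s with hJ2xd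
  set Jb := ∫ s in x..(m+h), ((m+h)-s) * f' s with hJbd
  clear_value L1 L2 I1 I2 J1 Jm J2x Jb
  -- integration by parts identities
  have hJ1 : J1 = h * f m - I1 := by
    rw [hJ1d, hI1]
    rw [intervalIntegral.integral_mul_deriv_eq_deriv_mul
      (u := fun s => s - (m-h)) (v := f) (u' := fun _ => (1:ℝ)) (v' := f')
      (fun y _ => (hasDerivAt_id y).sub_const (m-h))
      (fun y hy => hderiv y (hsub le_rfl ham hmb hy))
      (Continuous.intervalIntegrable continuous_const _ _)
      (hf'i _ _ le_rfl ham hmb)]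
    simp only [one_mul]
    ring
  have hJ2 : J2x + Jb = I2 - h * f m := by
    have hadj : J2x + Jb = ∫ s in m..(m+h), ((m+h)-s) * f' s := by
      rw [hJ2xd, hJbd]
      exact intervalIntegral.integral_add_adjacent_intervals
        (hgi _ (by fun_prop) _ _ ham hx1 hxb) (hgi _ (by fun_prop) _ _ hax hxb le_rfl)
    rw [hadj, hI2]
    rw [intervalIntegral.integral_mul_deriv_eq_deriv_mul
      (u := fun s => (m+h) - s) (v := f) (u' := fun _ => (-1:ℝ)) (v' := f')
      (fun y _ => ((hasDerivAt_id y).const_sub (m+h)))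
      (fun y hy => hderiv y (hsub ham hmb le_rfl hy))
      (Continuous.intervalIntegrable continuous_const _ _)
      (hf'i _ _ ham hmb le_rfl)]
    simp only [neg_one_mul, intervalIntegral.integral_neg]
    ring
  have hJm : Jm = f x - f m := by
    rw [hJmd]
    exact intervalIntegral.integral_eq_sub_of_hasDerivAt
      (fun y hy => hderiv y (hsub ham hx1 hxb hy)) (hf'i _ _ ham hx1 hxb)
  -- key representation
  have hkey : f x - (L1 * ((1/h) * I1) + L2 * ((1/h) * I2))
      = (L1/h) * J1 + (Jm - (L2/h) * J2x) - (L2/h) * Jb := by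
    have hJb : Jb = I2 - h * f m - J2x := by linarith
    rw [hJ1, hJm, hJb, hL1, hL2]
    field_simp
    ring

  -- abbreviations for the polygon kernel mass and moment
  set MpV := ((m+h)-x)^2/2 with hMpVd
  set SpV := (m+h)*((m+h)^2-x^2)/2 - ((m+h)^3-x^3)/3 with hSpVd
  clear_value MpV SpV
  have hMpVpos : 0 < MpV := by
    have hxb' : (0:ℝ) < m + h - x := by linarith
    rw [hMpVd]; nlinarith [mul_pos hxb' hxb']
  -- step 1 : pointwise comparison on the right bin
  have key1 : ∀ v ∈ Set.Icc (m-h) x, Jb ≤ (f' v - q*v + r) * MpV + q * SpV := by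
    intro v hv
    have hfs : ∀ s ∈ Set.Icc x (m+h),
        ((m+h)-s) * f' s ≤ ((m+h)-s) * (f' v + (q*(s-v) + r)) := by
      intro s hs
      apply mul_le_mul_of_nonneg_left _ (by linarith [hs.2] : (0:ℝ) ≤ (m+h)-s)
      have hb := hbound s hs v hv
      have h1 : f' s - f' v ≤ q*(s-v)+r := le_trans (le_abs_self _) hb
      linarith
    have hmono := intervalIntegral.integral_mono_on hxb
      (hgi _ (by fun_prop) _ _ hax hxb le_rfl)
      (Continuous.intervalIntegrable (by fun_prop) _ _) hfs
    have hRval : (∫ s in x..(m+h), ((m+h)-s) * (f' v + (q*(s-v) + r)))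
        = (f' v - q*v + r) * MpV + q * SpV := by
      rw [integral_poly_eq (-q) (q*(m+h) - (f' v - q*v + r)) ((f' v - q*v + r)*(m+h))
        x (m+h) _ (fun s => by ring), hMpVd, hSpVd]
      ring
    rw [hJbd]
    exact hmono.trans (le_of_eq hRval)
  have key1' : ∀ v ∈ Set.Icc (m-h) x, (f' v + q*v - r) * MpV - q * SpV ≤ Jb := by
    intro v hv
    have hfs : ∀ s ∈ Set.Icc x (m+h),
        ((m+h)-s) * (f' v - (q*(s-v) + r)) ≤ ((m+h)-s) * f' s := by
      intro s hs
      apply mul_le_mul_of_nonneg_left _ (by linarith [hs.2] : (0:ℝ) ≤ (m+h)-s)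
      have hb := hbound s hs v hv
      have h2 : |f' v - f' s| ≤ q*(s-v)+r := by rwa [abs_sub_comm]
      have h1 := le_abs_self (f' v - f' s)
      linarith
    have hmono := intervalIntegral.integral_mono_on hxb
      (Continuous.intervalIntegrable (by fun_prop) _ _)
      (hgi _ (by fun_prop) _ _ hax hxb le_rfl) hfs
    have hRval : (∫ s in x..(m+h), ((m+h)-s) * (f' v - (q*(s-v) + r)))
        = (f' v + q*v - r) * MpV - q * SpV := by
      rw [integral_poly_eq q (-(q*(m+h)) - (f' v + q*v - r)) ((m+h)*(f' v + q*v - r)) x (m+h) _ (fun s => by ring), hMpVd, hSpVd]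
      ring
    rw [hJbd]
    exact (le_of_eq hRval.symm).trans hmono
  -- nonnegativity of weight n2
  have hn2 : ∀ u ∈ Set.Icc m x, (0:ℝ) ≤ 1 - (L2/h)*((m+h)-u) := by
    intro u hu
    have e : (L2/h)*h = L2 := by field_simp
    have h1 : (L2/h)*((m+h)-u) ≤ (L2/h)*h :=
      mul_le_mul_of_nonneg_left (by linarith [hu.1]) (div_nonneg hL2n hh.le)
    linarith [hL2le, e ▸ h1]
  have hsub1 : Set.Icc (m-h) m ⊆ Set.Icc (m-h) x := Set.Icc_subset_Icc le_rfl hx1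
  have hsub2 : Set.Icc m x ⊆ Set.Icc (m-h) x := Set.Icc_subset_Icc ham le_rfl
  -- lower bound part
  have hpos1 : 0 ≤ ∫ v in (m-h)..m, (v-(m-h)) * ((f' v - q*v + r)*MpV + q*SpV - Jb) := by
    apply intervalIntegral.integral_nonneg ham
    intro u hu
    have hk := key1 u (hsub1 hu)
    have : (0:ℝ) ≤ u - (m-h) := by linarith [hu.1]
    apply mul_nonneg this
    linarith
  have hpos2 : 0 ≤ ∫ v in m..x, (1 - (L2/h)*((m+h)-v)) * ((f' v - q*v + r)*MpV + q*SpV - Jb) := by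
    apply intervalIntegral.integral_nonneg hx1
    intro u hu
    have hk := key1 u (hsub2 hu)
    apply mul_nonneg (hn2 u hu)
    linarith
  have hexp1 : (∫ v in (m-h)..m, (v-(m-h)) * ((f' v - q*v + r)*MpV + q*SpV - Jb))
      = MpV * J1 + (-(q*MpV)) * ((m^3-(m-h)^3)/3 - (m-h)*(m^2-(m-h)^2)/2)
        + (r*MpV + q*SpV - Jb) * (h^2/2) := by
    rw [show (fun v => (v-(m-h)) * ((f' v - q*v + r)*MpV + q*SpV - Jb))
        = (fun v => MpV * ((v-(m-h)) * f' v) + (-(q*MpV)) * (v*(v-(m-h)))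
            + (r*MpV + q*SpV - Jb) * (v-(m-h))) from funext fun v => by ring]
    rw [int_comb _ _ _ _ _ _ _ _ (hgi _ (by fun_prop) _ _ le_rfl ham hmb)
      (Continuous.intervalIntegrable (by fun_prop) _ _)
      (Continuous.intervalIntegrable (by fun_prop) _ _)]
    rw [← hJ1d,
      integral_poly_eq 1 (-(m-h)) 0 (m-h) m _ (fun v => by ring),
      integral_poly_eq 0 1 (-(m-h)) (m-h) m _ (fun v => by ring)]
    ring
  have hA2 : (∫ v in m..x, (1 - (L2/h)*((m+h)-v)) * f' v) = Jm - (L2/h) * J2x := by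
    rw [show (fun v => (1 - (L2/h)*((m+h)-v)) * f' v)
        = (fun v => f' v - (L2/h) * (((m+h)-v) * f' v)) from funext fun v => by ring]
    rw [intervalIntegral.integral_sub (hf'i _ _ ham hx1 hxb)
      ((hgi _ (by fun_prop) _ _ ham hx1 hxb).const_mul (L2/h)),
      intervalIntegral.integral_const_mul, ← hJmd, ← hJ2xd]
  have hexp2 : (∫ v in m..x, (1 - (L2/h)*((m+h)-v)) * ((f' v - q*v + r)*MpV + q*SpV - Jb))
      = MpV * (Jm - (L2/h) * J2x)
        + (-(q*MpV)) * ((L2/h)*(x^3-m^3)/3 + (1-(L2/h)*(m+h))*(x^2-m^2)/2)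
        + (r*MpV + q*SpV - Jb) * ((L2/h)*(x^2-m^2)/2 + (1-(L2/h)*(m+h))*(x-m)) := by
    rw [show (fun v => (1 - (L2/h)*((m+h)-v)) * ((f' v - q*v + r)*MpV + q*SpV - Jb))
        = (fun v => MpV * ((1 - (L2/h)*((m+h)-v)) * f' v)
            + (-(q*MpV)) * (v*(1 - (L2/h)*((m+h)-v)))
            + (r*MpV + q*SpV - Jb) * (1 - (L2/h)*((m+h)-v))) from funext fun v => by ring]
    rw [int_comb _ _ _ _ _ _ _ _ (hgi _ (by fun_prop) _ _ ham hx1 hxb)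
      (Continuous.intervalIntegrable (by fun_prop) _ _)
      (Continuous.intervalIntegrable (by fun_prop) _ _)]
    rw [hA2,
      integral_poly_eq (L2/h) (1-(L2/h)*(m+h)) 0 m x _ (fun v => by ring),
      integral_poly_eq 0 (L2/h) (1-(L2/h)*(m+h)) m x _ (fun v => by ring)]
    ring

  -- mirrored (upper bound) part
  have hpos1' : 0 ≤ ∫ v in (m-h)..m, (v-(m-h)) * (Jb - ((f' v + q*v - r)*MpV - q*SpV)) := by
    apply intervalIntegral.integral_nonneg ham
    intro u hu
    have hk := key1' u (hsub1 hu)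
    have h0 : (0:ℝ) ≤ u - (m-h) := by linarith [hu.1]
    apply mul_nonneg h0; linarith
  have hpos2' : 0 ≤ ∫ v in m..x, (1 - (L2/h)*((m+h)-v)) * (Jb - ((f' v + q*v - r)*MpV - q*SpV)) := by
    apply intervalIntegral.integral_nonneg hx1
    intro u hu
    have hk := key1' u (hsub2 hu)
    apply mul_nonneg (hn2 u hu); linarith
  have hexp1' : (∫ v in (m-h)..m, (v-(m-h)) * (Jb - ((f' v + q*v - r)*MpV - q*SpV)))
      = (-MpV) * J1 + (-(q*MpV)) * ((m^3-(m-h)^3)/3 - (m-h)*(m^2-(m-h)^2)/2)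
        + (Jb + q*SpV + r*MpV) * (h^2/2) := by
    rw [show (fun v => (v-(m-h)) * (Jb - ((f' v + q*v - r)*MpV - q*SpV)))
        = (fun v => (-MpV) * ((v-(m-h)) * f' v) + (-(q*MpV)) * (v*(v-(m-h)))
            + (Jb + q*SpV + r*MpV) * (v-(m-h))) from funext fun v => by ring]
    rw [int_comb _ _ _ _ _ _ _ _ (hgi _ (by fun_prop) _ _ le_rfl ham hmb)
      (Continuous.intervalIntegrable (by fun_prop) _ _)
      (Continuous.intervalIntegrable (by fun_prop) _ _)]
    rw [← hJ1d,
      integral_poly_eq 1 (-(m-h)) 0 (m-h) m _ (fun v => by ring),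
      integral_poly_eq 0 1 (-(m-h)) (m-h) m _ (fun v => by ring)]
    ring
  have hexp2' : (∫ v in m..x, (1 - (L2/h)*((m+h)-v)) * (Jb - ((f' v + q*v - r)*MpV - q*SpV)))
      = (-MpV) * (Jm - (L2/h) * J2x)
        + (-(q*MpV)) * ((L2/h)*(x^3-m^3)/3 + (1-(L2/h)*(m+h))*(x^2-m^2)/2)
        + (Jb + q*SpV + r*MpV) * ((L2/h)*(x^2-m^2)/2 + (1-(L2/h)*(m+h))*(x-m)) := by
    rw [show (fun v => (1 - (L2/h)*((m+h)-v)) * (Jb - ((f' v + q*v - r)*MpV - q*SpV)))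
        = (fun v => (-MpV) * ((1 - (L2/h)*((m+h)-v)) * f' v)
            + (-(q*MpV)) * (v*(1 - (L2/h)*((m+h)-v)))
            + (Jb + q*SpV + r*MpV) * (1 - (L2/h)*((m+h)-v))) from funext fun v => by ring]
    rw [int_comb _ _ _ _ _ _ _ _ (hgi _ (by fun_prop) _ _ ham hx1 hxb)
      (Continuous.intervalIntegrable (by fun_prop) _ _)
      (Continuous.intervalIntegrable (by fun_prop) _ _)]
    rw [hA2,
      integral_poly_eq (L2/h) (1-(L2/h)*(m+h)) 0 m x _ (fun v => by ring),
      integral_poly_eq 0 (L2/h) (1-(L2/h)*(m+h)) m x _ (fun v => by ring)]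
    ring
  -- assembly : lower bound on the error
  have h1 := mul_nonneg (div_nonneg hL1n hh.le) (hexp1 ▸ hpos1)
  have h2 := hexp2 ▸ hpos2
  have h1' := mul_nonneg (div_nonneg hL1n hh.le) (hexp1' ▸ hpos1')
  have h2' := hexp2' ▸ hpos2'
  have heq : MpV * ((f x - (L1 * ((1/h) * I1) + L2 * ((1/h) * I2)))
        + q*((h^2 - 3*(x-m)^2)/6) + r*((L2/h)*MpV))
      = L1/h * (MpV * J1 + (-(q*MpV)) * ((m^3-(m-h)^3)/3 - (m-h)*(m^2-(m-h)^2)/2)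
          + (r*MpV + q*SpV - Jb) * (h^2/2))
        + (MpV * (Jm - (L2/h) * J2x)
          + (-(q*MpV)) * ((L2/h)*(x^3-m^3)/3 + (1-(L2/h)*(m+h))*(x^2-m^2)/2)
          + (r*MpV + q*SpV - Jb) * ((L2/h)*(x^2-m^2)/2 + (1-(L2/h)*(m+h))*(x-m))) := by
    rw [hkey, hL1, hL2, hMpVd, hSpVd]
    field_simp
    ring
  have heq' : MpV * (-(f x - (L1 * ((1/h) * I1) + L2 * ((1/h) * I2)))
        + q*((h^2 - 3*(x-m)^2)/6) + r*((L2/h)*MpV))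
      = L1/h * ((-MpV) * J1 + (-(q*MpV)) * ((m^3-(m-h)^3)/3 - (m-h)*(m^2-(m-h)^2)/2)
          + (Jb + q*SpV + r*MpV) * (h^2/2))
        + ((-MpV) * (Jm - (L2/h) * J2x)
          + (-(q*MpV)) * ((L2/h)*(x^3-m^3)/3 + (1-(L2/h)*(m+h))*(x^2-m^2)/2)
          + (Jb + q*SpV + r*MpV) * ((L2/h)*(x^2-m^2)/2 + (1-(L2/h)*(m+h))*(x-m))) := by
    rw [hkey, hL1, hL2, hMpVd, hSpVd]
    field_simp
    ring
  have hlow : 0 ≤ MpV * ((f x - (L1 * ((1/h) * I1) + L2 * ((1/h) * I2)))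
        + q*((h^2 - 3*(x-m)^2)/6) + r*((L2/h)*MpV)) := by
    rw [heq]; linarith
  have hup : 0 ≤ MpV * (-(f x - (L1 * ((1/h) * I1) + L2 * ((1/h) * I2)))
        + q*((h^2 - 3*(x-m)^2)/6) + r*((L2/h)*MpV)) := by
    rw [heq']; linarith
  have hlow2 := (mul_nonneg_iff_of_pos_left hMpVpos).mp hlow
  have hup2 := (mul_nonneg_iff_of_pos_left hMpVpos).mp hup
  clear h1 h2 h1' h2' heq heq' hlow hup hexp1 hexp2 hexp1' hexp2' hpos1 hpos2 hpos1'
    hpos2' key1 key1' hbound hderiv hcont hfc hsub hfi hgi hf'i hn2 hsub1 hsub2 hkey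
    hJ1 hJ2 hJm hI1 hI2 hJ1d hJmd hJ2xd hJbd
  -- final polynomial bounds
  have hMw : (L2/h)*MpV ≤ h/4 := by
    rw [hL2, hMpVd, div_div, div_mul_eq_mul_div, div_le_iff₀ (mul_pos hh hh)]
    have e : (x-(m-h/2))*((m+h-x)^2/2) = ((x-m)+h/2)*((h-(x-m))^2/2) := by ring
    rw [e]
    exact polyMw h (x-m) hh (by linarith) (by linarith)
  have hDS : (h^2 - 3*(x-m)^2)/6 ≤ h^2/6 := by nlinarith [sq_nonneg (x-m)]
  have b1 : q*((h^2-3*(x-m)^2)/6) ≤ q*(h^2/6) := mul_le_mul_of_nonneg_left hDS hq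
  have b2 : r*((L2/h)*MpV) ≤ r*(h/4) := mul_le_mul_of_nonneg_left hMw hr
  apply abs_le.mpr
  constructor <;> [skip; skip] <;> linarith

lemma aux_right (f f' : ℝ → ℝ) (γ L₀ m h x : ℝ) (hγ0 : 0 < γ) (hγ1 : γ ≤ 1) (hL₀ : 0 < L₀)
    (hh : 0 < h) (hx1 : m ≤ x) (hx2 : x ≤ m + h/2)
    (hderiv : ∀ s ∈ Set.Icc (m-h) (m+h), HasDerivAt f (f' s) s)
    (hcont : ContinuousOn f' (Set.Icc (m-h) (m+h)))
    (hHolder : ∀ u ∈ Set.Icc (m-h) (m+h), ∀ v ∈ Set.Icc (m-h) (m+h),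
      |f' u - f' v| ≤ L₀ * |u - v| ^ γ) :
    |f x - ((m + h/2 - x)/h * ((1/h) * ∫ s in (m-h)..m, f s)
          + (x - (m - h/2))/h * ((1/h) * ∫ s in m..(m+h), f s))| ≤ L₀/4 * h^(1+γ) := by
  set c := 2*h/3 with hc
  have hcpos : 0 < c := by rw [hc]; linarith
  set q := L₀ * (γ * c^(γ-1)) with hqd
  set r := L₀ * ((1-γ) * c^γ) with hrd
  have hq : 0 ≤ q := by
    rw [hqd]; exact mul_nonneg hL₀.le (mul_nonneg hγ0.le (Real.rpow_nonneg hcpos.le _))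
  have hr : 0 ≤ r := by
    rw [hrd]; exact mul_nonneg hL₀.le (mul_nonneg (by linarith) (Real.rpow_nonneg hcpos.le _))
  have hbound : ∀ u ∈ Set.Icc x (m+h), ∀ v ∈ Set.Icc (m-h) x,
      |f' u - f' v| ≤ q*(u-v) + r := by
    intro u hu v hv
    have huv : (0:ℝ) ≤ u - v := by linarith [hu.1, hv.2]
    have hH := hHolder u ⟨by linarith [hu.1], hu.2⟩ v ⟨hv.1, by linarith [hv.2]⟩
    have htan := tangent_rpow γ c (u-v) hγ0 hγ1 hcpos huv
    calc |f' u - f' v| ≤ L₀ * |u-v|^γ := hH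
      _ = L₀ * (u-v)^γ := by rw [abs_of_nonneg huv]
      _ ≤ L₀ * (γ * c^(γ-1) * (u-v) + (1-γ)*c^γ) := mul_le_mul_of_nonneg_left htan hL₀.le
      _ = q*(u-v) + r := by rw [hqd, hrd]; ring
  have hcore := core f f' m h x q r hh hx1 hx2 hderiv hcont hq hr hbound
  refine hcore.trans ?_
  have hpos : (0:ℝ) < h^(1+γ) := Real.rpow_pos_of_pos hh _
  have e1 : c^(γ-1) = (2/3:ℝ)^(γ-1) * h^(γ-1) := by
    rw [hc, show 2*h/3 = (2/3:ℝ)*h by ring, Real.mul_rpow (by norm_num) hh.le]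
  have e2 : c^γ = (2/3:ℝ)^γ * h^γ := by
    rw [hc, show 2*h/3 = (2/3:ℝ)*h by ring, Real.mul_rpow (by norm_num) hh.le]
  have f1 : (2/3:ℝ)^(γ-1) ≤ 3/2 := by
    have e : (2/3:ℝ)^(γ-1) = (3/2:ℝ)^(1-γ) := by
      rw [show (2/3:ℝ) = ((3/2:ℝ))⁻¹ by norm_num, Real.inv_rpow (by norm_num),
        ← Real.rpow_neg (by norm_num)]
      norm_num
    rw [e]
    calc (3/2:ℝ)^(1-γ) ≤ (3/2:ℝ)^(1:ℝ) :=
          Real.rpow_le_rpow_of_exponent_le (by norm_num) (by linarith)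
      _ = 3/2 := Real.rpow_one _
  have f2 : (2/3:ℝ)^γ ≤ 1 := Real.rpow_le_one (by norm_num) (by norm_num) hγ0.le
  have e3 : h^(γ-1) * h^2 = h^(1+γ) := by
    rw [← Real.rpow_natCast h 2, ← Real.rpow_add hh]
    norm_num
    rw [show γ-1+(2:ℝ) = 1+γ by ring]
  have e4 : h^γ * h = h^(1+γ) := by
    have := Real.rpow_add hh γ 1
    rw [Real.rpow_one] at this
    rw [← this, show γ+(1:ℝ) = 1+γ by ring]
  have hq2 : q*h^2/6 ≤ L₀*γ*h^(1+γ)/4 := by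
    have step : L₀*γ*(2/3:ℝ)^(γ-1) * h^(1+γ) ≤ L₀*γ*(3/2) * h^(1+γ) :=
      mul_le_mul_of_nonneg_right
        (mul_le_mul_of_nonneg_left f1 (mul_nonneg hL₀.le hγ0.le)) hpos.le
    calc q*h^2/6 = L₀*γ*(2/3:ℝ)^(γ-1) * (h^(γ-1)*h^2) /6 := by rw [hqd, e1]; ring
      _ = L₀*γ*(2/3:ℝ)^(γ-1) * h^(1+γ)/6 := by rw [e3]
      _ ≤ L₀*γ*(3/2) * h^(1+γ)/6 := by linarith
      _ = L₀*γ*h^(1+γ)/4 := by ring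
  have hr2 : r*h/4 ≤ L₀*(1-γ)*h^(1+γ)/4 := by
    have step : L₀*(1-γ)*(2/3:ℝ)^γ * h^(1+γ) ≤ L₀*(1-γ)*1 * h^(1+γ) :=
      mul_le_mul_of_nonneg_right
        (mul_le_mul_of_nonneg_left f2 (mul_nonneg hL₀.le (by linarith))) hpos.le
    calc r*h/4 = L₀*(1-γ)*(2/3:ℝ)^γ * (h^γ*h) /4 := by rw [hrd, e2]; ring
      _ = L₀*(1-γ)*(2/3:ℝ)^γ * h^(1+γ)/4 := by rw [e4]
      _ ≤ L₀*(1-γ)*1 * h^(1+γ)/4 := by linarith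
      _ = L₀*(1-γ)*h^(1+γ)/4 := by ring
  have : L₀*γ*h^(1+γ)/4 + L₀*(1-γ)*h^(1+γ)/4 = L₀/4*h^(1+γ) := by ring
  linarith

lemma aux_left (f f' : ℝ → ℝ) (γ L₀ m h x : ℝ) (hγ0 : 0 < γ) (hγ1 : γ ≤ 1) (hL₀ : 0 < L₀)
    (hh : 0 < h) (hx1 : m - h/2 ≤ x) (hx2 : x ≤ m)
    (hderiv : ∀ s ∈ Set.Icc (m-h) (m+h), HasDerivAt f (f' s) s)
    (hcont : ContinuousOn f' (Set.Icc (m-h) (m+h)))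
    (hHolder : ∀ u ∈ Set.Icc (m-h) (m+h), ∀ v ∈ Set.Icc (m-h) (m+h),
      |f' u - f' v| ≤ L₀ * |u - v| ^ γ) :
    |f x - ((m + h/2 - x)/h * ((1/h) * ∫ s in (m-h)..m, f s)
          + (x - (m - h/2))/h * ((1/h) * ∫ s in m..(m+h), f s))| ≤ L₀/4 * h^(1+γ) := by
  set g : ℝ → ℝ := fun y => f (2*m - y) with hg
  set g' : ℝ → ℝ := fun y => -f' (2*m - y) with hg'
  have hmem : ∀ s ∈ Set.Icc (m-h) (m+h), 2*m - s ∈ Set.Icc (m-h) (m+h) := by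
    intro s hs; exact ⟨by linarith [hs.2], by linarith [hs.1]⟩
  have hderiv_g : ∀ s ∈ Set.Icc (m-h) (m+h), HasDerivAt g (g' s) s := by
    intro s hs
    have inner : HasDerivAt (fun y : ℝ => 2*m - y) (-1) s := (hasDerivAt_id s).const_sub (2*m)
    have := HasDerivAt.comp s (hderiv _ (hmem s hs)) inner
    rw [mul_neg_one] at this
    exact this
  have hcont_g : ContinuousOn g' (Set.Icc (m-h) (m+h)) := by
    rw [hg']
    exact ((hcont.comp (Continuous.continuousOn (by fun_prop)) hmem).neg)
  have hHolder_g : ∀ u ∈ Set.Icc (m-h) (m+h), ∀ v ∈ Set.Icc (m-h) (m+h),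
      |g' u - g' v| ≤ L₀ * |u - v| ^ γ := by
    intro u hu v hv
    have e : g' u - g' v = -(f' (2*m-u) - f' (2*m-v)) := by rw [hg']; ring
    rw [e, abs_neg]
    have := hHolder _ (hmem u hu) _ (hmem v hv)
    rw [show (2*m-u) - (2*m-v) = v - u by ring] at this
    rw [abs_sub_comm u v]
    exact this
  have H := aux_right g g' γ L₀ m h (2*m - x) hγ0 hγ1 hL₀ hh (by linarith) (by linarith)
    hderiv_g hcont_g hHolder_g
  have hg1 : (∫ s in (m-h)..m, g s) = ∫ s in m..(m+h), f s := by
    show (∫ s in (m-h)..m, f (2*m - s)) = _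
    rw [intervalIntegral.integral_comp_sub_left f (2*m),
      show 2*m - m = m by ring, show 2*m - (m-h) = m + h by ring]
  have hg2 : (∫ s in m..(m+h), g s) = ∫ s in (m-h)..m, f s := by
    show (∫ s in m..(m+h), f (2*m - s)) = _
    rw [intervalIntegral.integral_comp_sub_left f (2*m),
      show 2*m - m = m by ring, show 2*m - (m+h) = m - h by ring]
  rw [hg1, hg2] at H
  have harg : f x - ((m + h/2 - x)/h * ((1/h) * ∫ s in (m-h)..m, f s)
          + (x - (m - h/2))/h * ((1/h) * ∫ s in m..(m+h), f s))
      = g (2*m - x) - ((m + h/2 - (2*m-x))/h * ((1/h) * ∫ s in m..(m+h), f s)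
          + ((2*m-x) - (m - h/2))/h * ((1/h) * ∫ s in (m-h)..m, f s)) := by
    rw [hg]
    show _ = f (2*m - (2*m-x)) - _
    rw [show 2*m - (2*m-x) = x by ring]
    ring
  rw [harg]
  exact H


/-- polygon approximation of a `C^1` density whose derivative is
Hölder of exponent `β - 1`, `β ∈ (1,2]`: on `[c_j, c_{j+1}]` the linear
interpolation of the scaled bin masses is within `(3 L₀ / 8) k^{-β}` of `f`. -/
theorem polygon_approx_holder
    (f f' : ℝ → ℝ) (β L₀ : ℝ) (hβ : 1 < β) (hβ2 : β ≤ 2) (hL₀ : 0 < L₀)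
    (hderiv : ∀ x ∈ Set.Icc (0:ℝ) 1, HasDerivAt f (f' x) x)
    (hf'cont : ContinuousOn f' (Set.Icc (0:ℝ) 1))
    (hHolder : ∀ x ∈ Set.Icc (0:ℝ) 1, ∀ y ∈ Set.Icc (0:ℝ) 1,
      |f' x - f' y| ≤ L₀ * |x - y| ^ (β - 1))
    (k : ℕ) (hk : 2 ≤ k) (j : ℕ) (hj1 : 1 ≤ j) (hjk : j ≤ k - 1) :
    ∀ x ∈ Set.Icc (((j:ℝ) - 1/2) / k) (((j:ℝ) + 1/2) / k),
      |f x -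
        ((k:ℝ) * (((j:ℝ) + 1/2) / k - x) *
            ((k:ℝ) * ∫ t in (((j:ℝ) - 1) / k)..((j:ℝ) / k), f t) +
         (k:ℝ) * (x - ((j:ℝ) - 1/2) / k) *
            ((k:ℝ) * ∫ t in ((j:ℝ) / k)..(((j:ℝ) + 1) / k), f t))|
        ≤ 3 * L₀ / 8 * (k:ℝ) ^ (-β) := by

  intro x hx
  have hk0 : (0:ℝ) < (k:ℝ) := by
    have : 0 < k := by omega
    exact_mod_cast this
  have hk0' : ((k:ℝ)) ≠ 0 := hk0.ne'
  have hj1' : (1:ℝ) ≤ (j:ℝ) := by exact_mod_cast hj1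
  have hjk' : (j:ℝ) + 1 ≤ (k:ℝ) := by
    have : j + 1 ≤ k := by omega
    exact_mod_cast this
  set m := (j:ℝ)/k with hm
  set h := ((k:ℝ))⁻¹ with hhd
  have hh : 0 < h := by rw [hhd]; positivity
  have hmh1 : m - h = ((j:ℝ)-1)/k := by rw [hm, hhd]; field_simp
  have hmh2 : m + h = ((j:ℝ)+1)/k := by rw [hm, hhd]; field_simp
  have hsub01 : Set.Icc (m-h) (m+h) ⊆ Set.Icc (0:ℝ) 1 := by
    intro s hs
    constructor
    · have : 0 ≤ m - h := by rw [hmh1]; apply div_nonneg (by linarith) hk0.le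
      linarith [hs.1]
    · have : m + h ≤ 1 := by rw [hmh2, div_le_one hk0]; linarith
      linarith [hs.2]
  have hderiv' : ∀ s ∈ Set.Icc (m-h) (m+h), HasDerivAt f (f' s) s :=
    fun s hs => hderiv s (hsub01 hs)
  have hcont' : ContinuousOn f' (Set.Icc (m-h) (m+h)) := hf'cont.mono hsub01
  have hHolder' : ∀ u ∈ Set.Icc (m-h) (m+h), ∀ v ∈ Set.Icc (m-h) (m+h),
      |f' u - f' v| ≤ L₀ * |u - v| ^ (β-1) :=
    fun u hu v hv => hHolder u (hsub01 hu) v (hsub01 hv)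
  have hγ0 : 0 < β - 1 := by linarith
  have hγ1 : β - 1 ≤ 1 := by linarith
  have hx1 : m - h/2 ≤ x := by
    have e : m - h/2 = ((j:ℝ) - 1/2)/k := by rw [hm, hhd]; field_simp
    rw [e]; exact hx.1
  have hx2 : x ≤ m + h/2 := by
    have e : m + h/2 = ((j:ℝ) + 1/2)/k := by rw [hm, hhd]; field_simp
    rw [e]; exact hx.2
  have H : |f x - ((m + h/2 - x)/h * ((1/h) * ∫ s in (m-h)..m, f s)
          + (x - (m - h/2))/h * ((1/h) * ∫ s in m..(m+h), f s))| ≤ L₀/4 * h^(1+(β-1)) := by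
    rcases le_total x m with hc | hc
    · exact aux_left f f' (β-1) L₀ m h x hγ0 hγ1 hL₀ hh hx1 hc hderiv' hcont' hHolder'
    · exact aux_right f f' (β-1) L₀ m h x hγ0 hγ1 hL₀ hh hc hx2 hderiv' hcont' hHolder'
  rw [show ((j:ℝ)-1)/k = m - h from hmh1.symm, show ((j:ℝ)+1)/k = m + h from hmh2.symm]
  have harg : (k:ℝ) * (((j:ℝ) + 1/2) / k - x) * ((k:ℝ) * ∫ t in (m-h)..m, f t) +
         (k:ℝ) * (x - ((j:ℝ) - 1/2) / k) * ((k:ℝ) * ∫ t in m..(m+h), f t)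
      = (m + h/2 - x)/h * ((1/h) * ∫ s in (m-h)..m, f s)
          + (x - (m - h/2))/h * ((1/h) * ∫ s in m..(m+h), f s) := by
    rw [hm, hhd]
    field_simp
  rw [harg]
  refine H.trans ?_
  have hrw : h^(1+(β-1)) = (k:ℝ) ^ (-β) := by
    rw [show (1:ℝ)+(β-1) = β by ring, hhd, Real.inv_rpow hk0.le, ← Real.rpow_neg hk0.le]
  rw [hrw]
  have hX : 0 ≤ (k:ℝ) ^ (-β) := Real.rpow_nonneg hk0.le _
  nlinarith [mul_nonneg hL₀.le hX]
end

section
/- Let f : ℝ → ℝ be strictly concave on an interval containing points x₁ < x₂, let ℓ be the affine function agreeing with f at x₁ and x₂, and let x̄ = (x₁+x₂)/2. If f is twice continuously differentiable, then ∫_{x₁}^{x₂} |f(x) − ℓ(x)| dx ≥ (1/2)(x₂−x₁)[f(x̄) − (f(x₁)+f(x₂))/2], and this quantity equals (1/16)(x₂−x₁)³[−f''(x₂) + O(x₂−x₁)] as x₂−x₁ → 0. -/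
open MeasureTheory intervalIntegral Filter

/-- for a strictly concave, twice continuously differentiable `f`, the
`L¹`-distance between `f` and its chord on `[x₁,x₂]` is at least the area of the
triangle with vertices `(x₁,f x₁)`, `(x̄, f x̄)`, `(x₂, f x₂)`, and this area equals
`(1/16)(x₂-x₁)³ [-f''(x₂) + O(x₂-x₁)]` as `x₂ ↓ x₁`. -/
theorem chord_triangle_area
    (f : ℝ → ℝ) (u v x₁ : ℝ) (hf : ContDiff ℝ 2 f)
    (hconc : StrictConcaveOn ℝ (Set.Icc u v) f)
    (hx₁ : x₁ ∈ Set.Ico u v) :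
    (∀ x₂ ∈ Set.Ioc x₁ v,
      (∫ x in x₁..x₂,
          |f x - (f x₁ + (f x₂ - f x₁) * (x - x₁) / (x₂ - x₁))|)
        ≥ (1/2) * (x₂ - x₁) * (f ((x₁ + x₂) / 2) - (f x₁ + f x₂) / 2))
    ∧ ∃ r : ℝ → ℝ,
        Tendsto r (nhdsWithin x₁ (Set.Ioi x₁)) (nhds 0) ∧
        ∀ x₂ ∈ Set.Ioc x₁ v,
          (1/2) * (x₂ - x₁) * (f ((x₁ + x₂) / 2) - (f x₁ + f x₂) / 2)
            = (1/16) * (x₂ - x₁) ^ 3 * (-(deriv (deriv f) x₂) + r x₂) := by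
  have hcf : Continuous f := hf.continuous
  constructor
  · intro x₂ hx₂
    obtain ⟨h12, h2v⟩ := hx₂
    have hd : (0:ℝ) < x₂ - x₁ := sub_pos.2 h12
    have hne : x₂ - x₁ ≠ 0 := ne_of_gt hd
    obtain ⟨m, hm⟩ : ∃ m : ℝ, m = (x₁ + x₂) / 2 := ⟨_, rfl⟩
    have h1m : x₁ < m := by rw [hm]; linarith
    have hm2 : m < x₂ := by rw [hm]; linarith
    have hm1ne : m - x₁ ≠ 0 := ne_of_gt (sub_pos.2 h1m)
    have h2mne : x₂ - m ≠ 0 := ne_of_gt (sub_pos.2 hm2)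
    obtain ⟨ℓ, hℓ⟩ : ∃ ℓ : ℝ → ℝ, ∀ x, ℓ x = f x₁ + (f x₂ - f x₁) * (x - x₁) / (x₂ - x₁) :=
      ⟨_, fun _ => rfl⟩
    have hcℓ : Continuous ℓ := by
      have : ℓ = fun x => f x₁ + (f x₂ - f x₁) * (x - x₁) / (x₂ - x₁) := funext hℓ
      rw [this]; fun_prop
    have hx₁m : x₁ ∈ Set.Icc u v := ⟨hx₁.1, le_trans h12.le h2v⟩
    have hmm : m ∈ Set.Icc u v := ⟨le_trans hx₁.1 h1m.le, le_trans hm2.le h2v⟩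
    -- chord value at midpoint
    have hℓm : ℓ m = (f x₁ + f x₂) / 2 := by
      rw [hℓ, hm]; field_simp; ring
    obtain ⟨C, hC⟩ : ∃ C : ℝ, C = f m - (f x₁ + f x₂) / 2 := ⟨_, rfl⟩
    -- pointwise lower bounds from concavity
    have lower1 : ∀ x ∈ Set.Icc x₁ m, (x - x₁) / (m - x₁) * C ≤ f x - ℓ x := by
      intro x hx
      have ha : (0:ℝ) ≤ (m - x) / (m - x₁) := by
        apply div_nonneg <;> linarith [hx.1, hx.2]
      have hb : (0:ℝ) ≤ (x - x₁) / (m - x₁) := by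
        apply div_nonneg <;> linarith [hx.1, hx.2]
      have hab : (m - x) / (m - x₁) + (x - x₁) / (m - x₁) = 1 := by
        field_simp; ring
      have hcc := hconc.concaveOn.2 hx₁m hmm ha hb hab
      have hxeq : ((m - x) / (m - x₁)) • x₁ + ((x - x₁) / (m - x₁)) • m = x := by
        simp only [smul_eq_mul]; field_simp; ring
      rw [hxeq] at hcc
      simp only [smul_eq_mul] at hcc
      have hℓx : (m - x) / (m - x₁) * f x₁ + (x - x₁) / (m - x₁) * ℓ m = ℓ x := by
        rw [hℓ, hℓ]; field_simp; ring
      have : (x - x₁) / (m - x₁) * C = (m - x) / (m - x₁) * f x₁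
          + (x - x₁) / (m - x₁) * f m - ℓ x := by
        rw [hC, ← hℓx, hℓm]; ring
      linarith
    have lower2 : ∀ x ∈ Set.Icc m x₂, (x₂ - x) / (x₂ - m) * C ≤ f x - ℓ x := by
      intro x hx
      have hx₂m : x₂ ∈ Set.Icc u v := ⟨le_trans hx₁.1 h12.le, h2v⟩
      have ha : (0:ℝ) ≤ (x₂ - x) / (x₂ - m) := by
        apply div_nonneg <;> linarith [hx.1, hx.2]
      have hb : (0:ℝ) ≤ (x - m) / (x₂ - m) := by
        apply div_nonneg <;> linarith [hx.1, hx.2]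
      have hab : (x₂ - x) / (x₂ - m) + (x - m) / (x₂ - m) = 1 := by
        field_simp; ring
      have hcc := hconc.concaveOn.2 hmm hx₂m ha hb hab
      have hxeq : ((x₂ - x) / (x₂ - m)) • m + ((x - m) / (x₂ - m)) • x₂ = x := by
        simp only [smul_eq_mul]; field_simp; ring
      rw [hxeq] at hcc
      simp only [smul_eq_mul] at hcc
      have hℓ2 : ℓ x₂ = f x₂ := by rw [hℓ]; field_simp; ring
      have hℓx : (x₂ - x) / (x₂ - m) * ℓ m + (x - m) / (x₂ - m) * ℓ x₂ = ℓ x := by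
        rw [hℓ, hℓ, hℓ]; field_simp; ring
      have : (x₂ - x) / (x₂ - m) * C = (x₂ - x) / (x₂ - m) * f m
          + (x - m) / (x₂ - m) * f x₂ - ℓ x := by
        rw [hC, ← hℓx, hℓm, hℓ2]; ring
      linarith
    -- integrability
    have hgc : Continuous (fun x => f x - ℓ x) := hcf.sub hcℓ
    have hint : ∀ a b : ℝ, IntervalIntegrable (fun x => f x - ℓ x) volume a b :=
      fun a b => hgc.intervalIntegrable a b
    have hintabs : IntervalIntegrable (fun x => |f x - ℓ x|) volume x₁ x₂ :=
      hgc.abs.intervalIntegrable x₁ x₂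
    -- step A : |g| ≥ g
    have stepA : (∫ x in x₁..x₂, |f x - ℓ x|) ≥ ∫ x in x₁..x₂, (f x - ℓ x) :=
      intervalIntegral.integral_mono_on h12.le (hint x₁ x₂) hintabs
        (fun x _ => le_abs_self _)
    -- split
    have split : (∫ x in x₁..x₂, (f x - ℓ x))
        = (∫ x in x₁..m, (f x - ℓ x)) + ∫ x in m..x₂, (f x - ℓ x) :=
      (intervalIntegral.integral_add_adjacent_intervals (hint x₁ m) (hint m x₂)).symm
    -- linear integrals
    have lin1 : (∫ x in x₁..m, (x - x₁) / (m - x₁) * C) = (m - x₁) / 2 * C := by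
      have hF : ∀ x ∈ Set.uIcc x₁ m, HasDerivAt (fun y => (y - x₁)^2 / (2 * (m - x₁)) * C)
          ((x - x₁) / (m - x₁) * C) x := by
        intro x _
        have h1 : HasDerivAt (fun y => (y - x₁)^2 / (2 * (m - x₁)) * C)
            ((2 * (x - x₁)^1 * 1) / (2 * (m - x₁)) * C) x := by
          exact (((hasDerivAt_id x).sub_const x₁).pow 2 |>.div_const _ |>.mul_const C)
        convert h1 using 1
        field_simp
      have := intervalIntegral.integral_eq_sub_of_hasDerivAt hF
        ((Continuous.intervalIntegrable (by fun_prop) x₁ m))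
      rw [this]; field_simp; ring
    have lin2 : (∫ x in m..x₂, (x₂ - x) / (x₂ - m) * C) = (x₂ - m) / 2 * C := by
      have hF : ∀ x ∈ Set.uIcc m x₂, HasDerivAt (fun y => -((x₂ - y)^2 / (2 * (x₂ - m))) * C)
          ((x₂ - x) / (x₂ - m) * C) x := by
        intro x _
        have h1 : HasDerivAt (fun y => -((x₂ - y)^2 / (2 * (x₂ - m))) * C)
            (-((2 * (x₂ - x)^1 * (-1)) / (2 * (x₂ - m))) * C) x := by
          exact ((((hasDerivAt_id x).const_sub x₂).pow 2 |>.div_const _).neg.mul_const C)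
        convert h1 using 1
        field_simp
      have := intervalIntegral.integral_eq_sub_of_hasDerivAt hF
        ((Continuous.intervalIntegrable (by fun_prop) m x₂))
      rw [this]; field_simp; ring
    have mono1 : (∫ x in x₁..m, (f x - ℓ x)) ≥ ∫ x in x₁..m, (x - x₁) / (m - x₁) * C :=
      intervalIntegral.integral_mono_on h1m.le
        (Continuous.intervalIntegrable (by fun_prop) x₁ m) (hint x₁ m) lower1
    have mono2 : (∫ x in m..x₂, (f x - ℓ x)) ≥ ∫ x in m..x₂, (x₂ - x) / (x₂ - m) * C :=
      intervalIntegral.integral_mono_on hm2.le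
        (Continuous.intervalIntegrable (by fun_prop) m x₂) (hint m x₂) lower2
    have hmain : (∫ x in x₁..x₂, |f x - ℓ x|) ≥ (m - x₁) / 2 * C + (x₂ - m) / 2 * C := by
      rw [← lin1, ← lin2]
      calc (∫ x in x₁..x₂, |f x - ℓ x|) ≥ ∫ x in x₁..x₂, (f x - ℓ x) := stepA
        _ = (∫ x in x₁..m, (f x - ℓ x)) + ∫ x in m..x₂, (f x - ℓ x) := split
        _ ≥ _ := add_le_add mono1 mono2
    have hfin : (m - x₁) / 2 * C + (x₂ - m) / 2 * C
        = (1/2) * (x₂ - x₁) * (f ((x₁ + x₂)/2) - (f x₁ + f x₂) / 2) := by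
      rw [hC, hm]; ring
    have hintg : (∫ x in x₁..x₂, |f x - ℓ x|)
        = ∫ x in x₁..x₂, |f x - (f x₁ + (f x₂ - f x₁) * (x - x₁) / (x₂ - x₁))| := by
      apply intervalIntegral.integral_congr
      intro x _
      simp only [hℓ]
    rw [← hintg]
    linarith [hmain, hfin]
  · -- part 2
    have hx1v : x₁ < v := hx₁.2
    have h2 : Differentiable ℝ f ∧ ContDiff ℝ 1 (deriv f) := by
      have h := (contDiff_succ_iff_deriv (n := 1)).1 (by exact_mod_cast hf)
      exact ⟨h.1, h.2.2⟩
    obtain ⟨hdf', hdf⟩ := h2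
    have hddf : Differentiable ℝ (deriv f) := hdf.differentiable one_ne_zero
    have hcddf : Continuous (deriv (deriv f)) := hdf.continuous_deriv le_rfl
    obtain ⟨c, hc⟩ : ∃ c : ℝ, c = deriv (deriv f) x₁ := ⟨_, rfl⟩
    refine ⟨fun x => 8 * ((f ((x₁ + x) / 2) - (f x₁ + f x) / 2) / (x - x₁) ^ 2)
        + deriv (deriv f) x, ?_, ?_⟩
    · -- tendsto 0
      have hslope : Tendsto (slope (deriv f) x₁) (nhdsWithin x₁ {x₁}ᶜ) (nhds c) := by
        rw [hc, ← hasDerivAt_iff_tendsto_slope]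
        exact (hddf x₁).hasDerivAt
      have hmcont : Continuous (fun x : ℝ => (x₁ + x) / 2) := by fun_prop
      have hmapm : Tendsto (fun x => (x₁ + x) / 2) (nhdsWithin x₁ (Set.Ioi x₁))
          (nhdsWithin x₁ (Set.Ioi x₁)) := by
        apply tendsto_nhdsWithin_of_tendsto_nhds_of_eventually_within
        · have := (hmcont.tendsto x₁).mono_left (nhdsWithin_le_nhds (s := Set.Ioi x₁))
          simpa using this
        · filter_upwards [self_mem_nhdsWithin] with x hx
          simp only [Set.mem_Ioi] at hx ⊢
          linarith
      have hsub : nhdsWithin x₁ (Set.Ioi x₁) ≤ nhdsWithin x₁ {x₁}ᶜ :=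
        nhdsWithin_mono _ (fun x hx => ne_of_gt hx)
      have hsl1 : Tendsto (fun x => slope (deriv f) x₁ ((x₁ + x) / 2))
          (nhdsWithin x₁ (Set.Ioi x₁)) (nhds c) :=
        hslope.comp (hmapm.mono_right hsub)
      have hsl2 : Tendsto (fun x => slope (deriv f) x₁ x)
          (nhdsWithin x₁ (Set.Ioi x₁)) (nhds c) :=
        hslope.comp (tendsto_id.mono_right hsub)
      -- L'Hôpital
      have hND : Tendsto (fun x => (f ((x₁ + x) / 2) - (f x₁ + f x) / 2) / (x - x₁) ^ 2)
          (nhdsWithin x₁ (Set.Ioi x₁)) (nhds (-c/8)) := by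
        apply HasDerivAt.lhopital_zero_nhdsGT
          (f' := fun x => deriv f ((x₁ + x) / 2) * (1/2) - deriv f x / 2)
          (g' := fun x => 2 * (x - x₁))
        · filter_upwards with x
          have hinner : HasDerivAt (fun y : ℝ => (x₁ + y) / 2) (1/2) x := by
            simpa using ((hasDerivAt_id x).const_add x₁).div_const 2
          have h1 : HasDerivAt (fun y => f ((x₁ + y) / 2)) (deriv f ((x₁ + x) / 2) * (1/2)) x :=
            ((hdf' ((x₁ + x)/2)).hasDerivAt).comp x hinner
          have h2 : HasDerivAt (fun y => (f x₁ + f y) / 2) (deriv f x / 2) x :=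
            (((hdf' x).hasDerivAt).const_add (f x₁)).div_const 2
          exact h1.sub h2
        · filter_upwards with x
          have := ((hasDerivAt_id x).sub_const x₁).fun_pow 2
          simpa using this
        · filter_upwards [self_mem_nhdsWithin] with x hx
          have : (0:ℝ) < x - x₁ := sub_pos.2 hx
          positivity
        · have hNc : Continuous (fun x => f ((x₁ + x) / 2) - (f x₁ + f x) / 2) :=
            (hcf.comp hmcont).sub ((continuous_const.add hcf).div_const 2)
          have h0 : f ((x₁ + x₁) / 2) - (f x₁ + f x₁) / 2 = 0 := by
            have : (x₁ + x₁) / 2 = x₁ := by ring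
            rw [this]; ring
          have := (hNc.tendsto x₁).mono_left
            (nhdsWithin_le_nhds (s := Set.Ioi x₁))
          rw [h0] at this
          exact this
        · have hDc : Continuous (fun x : ℝ => (x - x₁) ^ 2) := by fun_prop
          have := (hDc.tendsto x₁).mono_left (nhdsWithin_le_nhds (s := Set.Ioi x₁))
          simpa using this
        · -- limit of quotient of derivatives
          have key : Tendsto (fun x => (1/8 : ℝ) * slope (deriv f) x₁ ((x₁ + x) / 2)
              - (1/4 : ℝ) * slope (deriv f) x₁ x) (nhdsWithin x₁ (Set.Ioi x₁))
              (nhds ((1/8 : ℝ) * c - (1/4 : ℝ) * c)) :=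
            (tendsto_const_nhds.mul hsl1).sub (tendsto_const_nhds.mul hsl2)
          have hcc : (1/8 : ℝ) * c - (1/4 : ℝ) * c = -c/8 := by ring
          rw [hcc] at key
          refine key.congr' ?_
          filter_upwards [self_mem_nhdsWithin] with x hx
          have hx' : (0:ℝ) < x - x₁ := sub_pos.2 hx
          have hxne : x - x₁ ≠ 0 := ne_of_gt hx'
          have hmne : (x₁ + x) / 2 - x₁ ≠ 0 := by
            have : (x₁ + x) / 2 - x₁ = (x - x₁) / 2 := by ring
            rw [this]
            positivity
          have hmid : (x₁ + x) / 2 - x₁ = (x - x₁) / 2 := by ring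
          rw [slope_def_field, slope_def_field, hmid]
          field_simp
          ring
      have hfinal : Tendsto (fun x => 8 * ((f ((x₁ + x) / 2) - (f x₁ + f x) / 2) / (x - x₁) ^ 2)
          + deriv (deriv f) x) (nhdsWithin x₁ (Set.Ioi x₁)) (nhds (8 * (-c/8) + c)) := by
        refine (tendsto_const_nhds.mul hND).add ?_
        have := (hcddf.tendsto x₁).mono_left (nhdsWithin_le_nhds (s := Set.Ioi x₁))
        rw [← hc] at this
        exact this
      have hz : (8:ℝ) * (-c/8) + c = 0 := by ring
      rw [hz] at hfinal
      exact hfinal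
    · intro x₂ hx₂
      have hd : (0:ℝ) < x₂ - x₁ := sub_pos.2 hx₂.1
      have hne : x₂ - x₁ ≠ 0 := ne_of_gt hd
      have hA : ∀ A D : ℝ, 1/2 * (x₂ - x₁) * A
          = 1/16 * (x₂ - x₁) ^ 3 * (-D + (8 * (A / (x₂ - x₁) ^ 2) + D)) := by
        intro A D
        field_simp
        ring
      exact hA _ _
end

section
/- Let f : ℝ → ℝ be concave on [x₁, x₂]. Then ∫_{x₁}^{x₂} (f(x) − ℓ(x)) dx ≥ (1/2)(x₂−x₁)[f((x₁+x₂)/2) − (f(x₁)+f(x₂))/2], where ℓ is the affine function with ℓ(x₁)=f(x₁) and ℓ(x₂)=f(x₂). -/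
open MeasureTheory intervalIntegral

/-- A concave function on a closed interval is bounded on the open interval. -/
lemma aux_concave_bound {f : ℝ → ℝ} {a b : ℝ} (hab : a < b)
    (h : ConcaveOn ℝ (Set.Icc a b) f) :
    ∃ M, ∀ x ∈ Set.Ioo a b, |f x| ≤ M := by
  set m := (a + b) / 2 with hm
  have hma : a < m := by rw [hm]; linarith
  have hmb : m < b := by rw [hm]; linarith
  have hmab : m - a = b - m := by rw [hm]; ring
  have hmmem : m ∈ Set.Icc a b := ⟨hma.le, hmb.le⟩
  have hamem : a ∈ Set.Icc a b := Set.left_mem_Icc.2 hab.le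
  have hbmem : b ∈ Set.Icc a b := Set.right_mem_Icc.2 hab.le
  refine ⟨|f a| + |f b| + |f m| + |f m - f a| + |f m - f b|, fun x hx => ?_⟩
  have hxm : x ∈ Set.Icc a b := Set.Ioo_subset_Icc_self hx
  have hlow : min (f a) (f b) ≤ f x :=
    h.ge_on_segment hamem hbmem (by rw [segment_eq_Icc hab.le]; exact hxm)
  have hup : f x ≤ |f m| + |f m - f a| + |f m - f b| := by
    rcases lt_trichotomy x m with hxlt | hxeq | hxgt
    · -- x < m < b : slope(x,m) ≥ slope(m,b)
      have hs := h.slope_anti_adjacent hxm hbmem hxlt hmb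
      have h1 : (0:ℝ) < m - x := by linarith
      have h2 : (0:ℝ) < b - m := by linarith
      have key : (f b - f m) * (m - x) ≤ (f m - f x) * (b - m) :=
        (div_le_div_iff₀ h2 h1).1 hs
      have hmx : m - x ≤ b - m := by linarith [hx.1]
      have hh1 : (f m - f b) * (m - x) ≤ |f m - f b| * (m - x) :=
        mul_le_mul_of_nonneg_right (le_abs_self _) h1.le
      have hh2 : |f m - f b| * (m - x) ≤ |f m - f b| * (b - m) :=
        mul_le_mul_of_nonneg_left hmx (abs_nonneg _)
      have hfm : f m ≤ |f m| := le_abs_self _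
      have habn : (0:ℝ) ≤ |f m - f a| := abs_nonneg _
      nlinarith [key, hh1, hh2, h2, hfm, habn]
    · subst hxeq
      have h3 := abs_nonneg (f m - f a)
      have h4 := abs_nonneg (f m - f b)
      have h5 := le_abs_self (f m)
      linarith
    · -- a < m < x : slope(a,m) ≥ slope(m,x)
      have hs := h.slope_anti_adjacent hamem hxm hma hxgt
      have h1 : (0:ℝ) < x - m := by linarith
      have h2 : (0:ℝ) < m - a := by linarith
      have key : (f x - f m) * (m - a) ≤ (f m - f a) * (x - m) :=
        (div_le_div_iff₀ h1 h2).1 hs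
      have hmx : x - m ≤ m - a := by linarith [hx.2]
      have hh1 : (f m - f a) * (x - m) ≤ |f m - f a| * (x - m) :=
        mul_le_mul_of_nonneg_right (le_abs_self _) h1.le
      have hh2 : |f m - f a| * (x - m) ≤ |f m - f a| * (m - a) :=
        mul_le_mul_of_nonneg_left hmx (abs_nonneg _)
      have hfm : f m ≤ |f m| := le_abs_self _
      have habn : (0:ℝ) ≤ |f m - f b| := abs_nonneg _
      nlinarith [key, hh1, hh2, h2, hfm, habn]
  have hlow' : -(|f a| + |f b|) ≤ f x := by
    have h1 := neg_abs_le (f a)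
    have h2 := neg_abs_le (f b)
    have h3 := abs_nonneg (f a)
    have h4 := abs_nonneg (f b)
    cases le_total (f a) (f b) with
    | inl hle => rw [min_eq_left hle] at hlow; linarith
    | inr hle => rw [min_eq_right hle] at hlow; linarith
  rw [abs_le]
  constructor
  · have h3 := abs_nonneg (f m)
    have h4 := abs_nonneg (f m - f a)
    have h5 := abs_nonneg (f m - f b)
    linarith
  · have h3 := abs_nonneg (f a)
    have h4 := abs_nonneg (f b)
    linarith

/-- A concave function on a closed interval is interval integrable. -/
lemma aux_concave_intervalIntegrable {f : ℝ → ℝ} {a b : ℝ} (hab : a < b)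
    (h : ConcaveOn ℝ (Set.Icc a b) f) : IntervalIntegrable f volume a b := by
  obtain ⟨M, hM⟩ := aux_concave_bound hab h
  rw [intervalIntegrable_iff_integrableOn_Ioo_of_le hab.le]
  have hcont : ContinuousOn f (Set.Ioo a b) :=
    (h.subset Set.Ioo_subset_Icc_self (convex_Ioo a b)).continuousOn isOpen_Ioo
  have hfin : IsFiniteMeasure (volume.restrict (Set.Ioo a b)) := by
    constructor
    rw [Measure.restrict_apply_univ]
    exact measure_Ioo_lt_top
  refine ⟨hcont.aestronglyMeasurable measurableSet_Ioo, ?_⟩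
  apply HasFiniteIntegral.of_bounded (C := M)
  filter_upwards [ae_restrict_mem measurableSet_Ioo] with x hx
  simpa [Real.norm_eq_abs] using hM x hx

/-- Integral of an affine function. -/
lemma aux_integral_affine (c q a b : ℝ) :
    ∫ x in a..b, (c + q * x) = c * (b - a) + q * (b ^ 2 - a ^ 2) / 2 := by
  have h1 : IntervalIntegrable (fun _ : ℝ => c) volume a b :=
    _root_.intervalIntegrable_const
  have h2 : IntervalIntegrable (fun x : ℝ => q * x) volume a b :=
    (intervalIntegral.intervalIntegrable_id).const_mul q
  rw [intervalIntegral.integral_add h1 h2, intervalIntegral.integral_const,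
    intervalIntegral.integral_const_mul, integral_id]
  simp [smul_eq_mul]
  ring

/-- Trapezoid lower bound for concave functions: `∫ f ≥ (b-a)(f a + f b)/2`. -/
lemma aux_trapezoid {f : ℝ → ℝ} {s : Set ℝ} (h : ConcaveOn ℝ s f) {a b : ℝ}
    (hab : a < b) (ha : a ∈ s) (hb : b ∈ s)
    (hint : IntervalIntegrable f volume a b) :
    (b - a) * (f a + f b) / 2 ≤ ∫ x in a..b, f x := by
  have hba : (0:ℝ) < b - a := by linarith
  set c := f a - (f b - f a) / (b - a) * a with hc
  set q := (f b - f a) / (b - a) with hq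
  have hchord : ∀ x ∈ Set.Icc a b, c + q * x ≤ f x := by
    intro x hxm
    set t := (x - a) / (b - a) with ht
    have ht0 : 0 ≤ t := div_nonneg (by linarith [hxm.1]) hba.le
    have ht1 : t ≤ 1 := by rw [ht, div_le_one hba]; linarith [hxm.2]
    have hxe : (1 - t) • a + t • b = x := by
      simp only [smul_eq_mul, ht]
      field_simp
      ring
    have hkey := h.2 ha hb (by linarith : (0:ℝ) ≤ 1 - t) ht0 (by ring)
    rw [hxe] at hkey
    have heq : c + q * x = (1 - t) • f a + t • f b := by
      simp only [smul_eq_mul, hc, hq, ht]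
      field_simp
      ring
    linarith [heq ▸ hkey]
  have hintc : IntervalIntegrable (fun x => c + q * x) volume a b :=
    (_root_.intervalIntegrable_const).add
      ((intervalIntegral.intervalIntegrable_id).const_mul q)
  have hle : ∫ x in a..b, (c + q * x) ≤ ∫ x in a..b, f x := by
    apply intervalIntegral.integral_mono_on hab.le hintc hint
    intro x hxm
    exact hchord x hxm
  rw [aux_integral_affine] at hle
  have heq2 : c * (b - a) + q * (b ^ 2 - a ^ 2) / 2 = (b - a) * (f a + f b) / 2 := by
    rw [hc, hq]
    field_simp
    ring
  linarith

/-- for `f` concave on `[x₁,x₂]`, the integral of `f` minus its chord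
is at least the area of the midpoint triangle:
`∫ (f - ℓ) ≥ (1/2)(x₂-x₁)[f((x₁+x₂)/2) - (f x₁ + f x₂)/2]`. -/
theorem concave_chord_integral_lower_bound
    (f : ℝ → ℝ) (x₁ x₂ : ℝ) (hx : x₁ < x₂)
    (hconc : ConcaveOn ℝ (Set.Icc x₁ x₂) f) :
    (∫ x in x₁..x₂,
        (f x - (f x₁ + (f x₂ - f x₁) * (x - x₁) / (x₂ - x₁))))
      ≥ (1/2) * (x₂ - x₁) * (f ((x₁ + x₂) / 2) - (f x₁ + f x₂) / 2) := by
  set m := (x₁ + x₂) / 2 with hm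
  have hm1 : x₁ < m := by rw [hm]; linarith
  have hm2 : m < x₂ := by rw [hm]; linarith
  have h1mem : x₁ ∈ Set.Icc x₁ x₂ := Set.left_mem_Icc.2 hx.le
  have h2mem : x₂ ∈ Set.Icc x₁ x₂ := Set.right_mem_Icc.2 hx.le
  have hmmem : m ∈ Set.Icc x₁ x₂ := ⟨hm1.le, hm2.le⟩
  have hint : IntervalIntegrable f volume x₁ x₂ :=
    aux_concave_intervalIntegrable hx hconc
  have hs1 : Set.uIcc x₁ m ⊆ Set.uIcc x₁ x₂ := by
    rw [Set.uIcc_of_le hm1.le, Set.uIcc_of_le hx.le]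
    exact Set.Icc_subset_Icc le_rfl hm2.le
  have hs2 : Set.uIcc m x₂ ⊆ Set.uIcc x₁ x₂ := by
    rw [Set.uIcc_of_le hm2.le, Set.uIcc_of_le hx.le]
    exact Set.Icc_subset_Icc hm1.le le_rfl
  have hint1 : IntervalIntegrable f volume x₁ m := hint.mono_set hs1
  have hint2 : IntervalIntegrable f volume m x₂ := hint.mono_set hs2
  have hintl : IntervalIntegrable
      (fun x => f x₁ + (f x₂ - f x₁) * (x - x₁) / (x₂ - x₁)) volume x₁ x₂ := by
    apply Continuous.intervalIntegrable
    continuity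
  rw [intervalIntegral.integral_sub hint hintl]
  have hxne : x₂ - x₁ ≠ 0 := by linarith
  have hchordint : (∫ x in x₁..x₂, (f x₁ + (f x₂ - f x₁) * (x - x₁) / (x₂ - x₁)))
      = (x₂ - x₁) * (f x₁ + f x₂) / 2 := by
    have heqf : ∀ x : ℝ, f x₁ + (f x₂ - f x₁) * (x - x₁) / (x₂ - x₁)
        = (f x₁ - (f x₂ - f x₁) / (x₂ - x₁) * x₁) + ((f x₂ - f x₁) / (x₂ - x₁)) * x := by
      intro x; field_simp; ring
    rw [intervalIntegral.integral_congr (fun x _ => heqf x), aux_integral_affine]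
    field_simp
    ring
  rw [hchordint]
  have hsplit : (∫ x in x₁..x₂, f x) = (∫ x in x₁..m, f x) + ∫ x in m..x₂, f x :=
    (intervalIntegral.integral_add_adjacent_intervals hint1 hint2).symm
  have ht1 : (m - x₁) * (f x₁ + f m) / 2 ≤ ∫ x in x₁..m, f x :=
    aux_trapezoid hconc hm1 h1mem hmmem hint1
  have ht2 : (x₂ - m) * (f m + f x₂) / 2 ≤ ∫ x in m..x₂, f x :=
    aux_trapezoid hconc hm2 hmmem h2mem hint2
  have hmx1 : m - x₁ = (x₂ - x₁) / 2 := by rw [hm]; ring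
  have hmx2 : x₂ - m = (x₂ - x₁) / 2 := by rw [hm]; ring
  rw [hmx1] at ht1
  rw [hmx2] at ht2
  rw [hsplit]
  have hgoal : (x₂ - x₁) / 2 * (f x₁ + f m) / 2 + (x₂ - x₁) / 2 * (f m + f x₂) / 2
      - (x₂ - x₁) * (f x₁ + f x₂) / 2
      = 1 / 2 * (x₂ - x₁) * (f m - (f x₁ + f x₂) / 2) := by ring
  linarith
end

section
/- Let f : [0,1] → ℝ be continuously differentiable with f' Lipschitz with constant L₀ (equivalently, f twice differentiable with |f''| ≤ L₀). Then the k-regular polygon p based on f (linear interpolation at midpoints c_j = (j−1/2)/k of the values k w_j with w_j the bin masses of f) satisfies sup_{x ∈ [c_1, c_k]} |f(x) − p(x)| ≤ (3L₀/8) k^{−2}. -/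
open MeasureTheory intervalIntegral

private lemma int_linear (a b x : ℝ) :
    (∫ t in a..b, (t - x)) = ((b - x) ^ 2 - (a - x) ^ 2) / 2 := by
  have h := intervalIntegral.integral_comp_sub_right (a := a) (b := b) (fun u => u) x
  rw [h, integral_id]

private lemma int_sq (a b x : ℝ) :
    (∫ t in a..b, (t - x) ^ 2) = ((b - x) ^ 3 - (a - x) ^ 3) / 3 := by
  have h := intervalIntegral.integral_comp_sub_right (a := a) (b := b) (fun u => u ^ 2) x
  rw [h, integral_pow]
  norm_num

private lemma key_poly (s : ℝ) (h0 : 0 ≤ s) (h1 : s ≤ 1) :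
    (1 - s) * ((1/2 - s) ^ 3 + (1/2 + s) ^ 3) + s * ((3/2 - s) ^ 3 - (1/2 - s) ^ 3)
      ≤ 9 / 8 := by
  nlinarith [sq_nonneg (2 * s - 1), sq_nonneg s, mul_nonneg h0 (sub_nonneg.2 h1)]

private lemma taylor_aux (f f' : ℝ → ℝ) (L₀ : ℝ) (hL₀ : 0 ≤ L₀)
    (hderiv : ∀ x ∈ Set.Icc (0:ℝ) 1, HasDerivAt f (f' x) x)
    (hf'cont : ContinuousOn f' (Set.Icc (0:ℝ) 1))
    (hLip : ∀ x ∈ Set.Icc (0:ℝ) 1, ∀ y ∈ Set.Icc (0:ℝ) 1,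
      |f' x - f' y| ≤ L₀ * |x - y|)
    (x y : ℝ) (hx : x ∈ Set.Icc (0:ℝ) 1) (hy : y ∈ Set.Icc (0:ℝ) 1) :
    |f y - f x - f' x * (y - x)| ≤ L₀ * (y - x) ^ 2 := by
  have hsub : Set.uIcc x y ⊆ Set.Icc (0:ℝ) 1 := Set.uIcc_subset_Icc hx hy
  have hInt : IntervalIntegrable f' volume x y :=
    (hf'cont.mono hsub).intervalIntegrable
  have hftc : (∫ t in x..y, f' t) = f y - f x :=
    intervalIntegral.integral_eq_sub_of_hasDerivAt
      (fun t ht => hderiv t (hsub ht)) hInt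
  have key : f y - f x - f' x * (y - x) = ∫ t in x..y, (f' t - f' x) := by
    rw [intervalIntegral.integral_sub hInt intervalIntegrable_const, hftc,
      intervalIntegral.integral_const, smul_eq_mul]
    ring
  rw [key]
  have hbd : ∀ t ∈ Set.uIoc x y, ‖f' t - f' x‖ ≤ L₀ * |y - x| := by
    intro t ht
    have ht' : t ∈ Set.uIcc x y := Set.uIoc_subset_uIcc ht
    have ht01 : t ∈ Set.Icc (0:ℝ) 1 := hsub ht'
    have h1 : |f' t - f' x| ≤ L₀ * |t - x| := hLip t ht01 x hx
    have h2 : |t - x| ≤ |y - x| := by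
      rcases le_total x y with h | h
      · rw [Set.uIcc_of_le h] at ht'
        rw [abs_of_nonneg (by linarith [ht'.1]), abs_of_nonneg (by linarith)]
        linarith [ht'.2]
      · rw [Set.uIcc_of_ge h] at ht'
        rw [abs_of_nonpos (by linarith [ht'.2]), abs_of_nonpos (by linarith)]
        linarith [ht'.1]
    calc ‖f' t - f' x‖ = |f' t - f' x| := Real.norm_eq_abs _
      _ ≤ L₀ * |t - x| := h1
      _ ≤ L₀ * |y - x| := mul_le_mul_of_nonneg_left h2 hL₀
  have hmain := intervalIntegral.norm_integral_le_of_norm_le_const hbd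
  rw [Real.norm_eq_abs] at hmain
  calc |∫ t in x..y, (f' t - f' x)| ≤ L₀ * |y - x| * |y - x| := hmain
    _ = L₀ * (y - x) ^ 2 := by rw [mul_assoc, ← abs_mul, ← sq, abs_sq]

set_option maxHeartbeats 1000000 in
/-- the `β = 2` polygon bound: if `f` is `C¹` with `f'` Lipschitz of
constant `L₀` on `[0,1]`, the `k`-regular polygon based on `f` satisfies
`|f x - p x| ≤ (3 L₀ / 8) k^{-2}` on `[c₁, c_k]` (stated on each `[c_j, c_{j+1}]`). -/
theorem polygon_approx_lipschitz_deriv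
    (f f' : ℝ → ℝ) (L₀ : ℝ) (hL₀ : 0 < L₀)
    (hderiv : ∀ x ∈ Set.Icc (0:ℝ) 1, HasDerivAt f (f' x) x)
    (hf'cont : ContinuousOn f' (Set.Icc (0:ℝ) 1))
    (hLip : ∀ x ∈ Set.Icc (0:ℝ) 1, ∀ y ∈ Set.Icc (0:ℝ) 1,
      |f' x - f' y| ≤ L₀ * |x - y|)
    (k : ℕ) (hk : 2 ≤ k) (j : ℕ) (hj1 : 1 ≤ j) (hjk : j ≤ k - 1) :
    ∀ x ∈ Set.Icc (((j:ℝ) - 1/2) / k) (((j:ℝ) + 1/2) / k),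
      |f x -
        ((k:ℝ) * (((j:ℝ) + 1/2) / k - x) *
            ((k:ℝ) * ∫ t in (((j:ℝ) - 1) / k)..((j:ℝ) / k), f t) +
         (k:ℝ) * (x - ((j:ℝ) - 1/2) / k) *
            ((k:ℝ) * ∫ t in ((j:ℝ) / k)..(((j:ℝ) + 1) / k), f t))|
        ≤ 3 * L₀ / 8 * ((k:ℝ) ^ 2)⁻¹ := by
  intro x hx
  have hK2 : (2:ℝ) ≤ (k:ℝ) := by exact_mod_cast hk
  have hK0 : (0:ℝ) < (k:ℝ) := by linarith
  have hKne : ((k:ℝ)) ≠ 0 := ne_of_gt hK0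
  have hj1' : (1:ℝ) ≤ (j:ℝ) := by exact_mod_cast hj1
  have hjk1 : j + 1 ≤ k := by omega
  have hjk' : (j:ℝ) + 1 ≤ (k:ℝ) := by exact_mod_cast hjk1
  set K : ℝ := (k:ℝ) with hKdef
  set a : ℝ := ((j:ℝ) - 1) / K with ha
  set m : ℝ := (j:ℝ) / K with hm
  set b : ℝ := ((j:ℝ) + 1) / K with hb
  clear_value K a m b
  obtain ⟨hx1, hx2⟩ := hx
  -- basic order facts
  have ha0 : (0:ℝ) ≤ a := by rw [ha]; exact div_nonneg (by linarith) hK0.le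
  have hb1 : b ≤ 1 := by rw [hb, div_le_one hK0]; linarith
  have ham : a ≤ m := by rw [ha, hm, div_le_div_iff₀ hK0 hK0]; nlinarith
  have hmb : m ≤ b := by rw [hm, hb, div_le_div_iff₀ hK0 hK0]; nlinarith
  have hax : a ≤ x := le_trans (by rw [ha, div_le_div_iff₀ hK0 hK0]; nlinarith) hx1
  have hxb : x ≤ b := le_trans hx2 (by rw [hb, div_le_div_iff₀ hK0 hK0]; nlinarith)
  have hx01 : x ∈ Set.Icc (0:ℝ) 1 := ⟨le_trans ha0 hax, le_trans hxb hb1⟩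
  have hmem : ∀ t : ℝ, a ≤ t → t ≤ b → t ∈ Set.Icc (0:ℝ) 1 := fun t h1 h2 =>
    ⟨le_trans ha0 h1, le_trans h2 hb1⟩
  have hL₀' : (0:ℝ) ≤ L₀ := hL₀.le
  -- continuity / integrability
  have hfc : ContinuousOn f (Set.Icc (0:ℝ) 1) := fun t ht =>
    (hderiv t ht).continuousAt.continuousWithinAt
  have hIf1 : IntervalIntegrable f volume a m :=
    (hfc.mono (Set.uIcc_subset_Icc (hmem a le_rfl (le_trans ham hmb)) (hmem m ham hmb))).intervalIntegrable
  have hIf2 : IntervalIntegrable f volume m b :=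
    (hfc.mono (Set.uIcc_subset_Icc (hmem m ham hmb) (hmem b (le_trans ham hmb) le_rfl))).intervalIntegrable
  have hgc : Continuous (fun t : ℝ => f x + f' x * (t - x)) :=
    continuous_const.add (continuous_const.mul (continuous_id.sub continuous_const))
  have hg1 : IntervalIntegrable (fun t : ℝ => f x + f' x * (t - x)) volume a m :=
    hgc.intervalIntegrable a m
  have hg2 : IntervalIntegrable (fun t : ℝ => f x + f' x * (t - x)) volume m b :=
    hgc.intervalIntegrable m b
  -- error integrals
  set E₁ : ℝ := ∫ t in a..m, (f t - f x - f' x * (t - x)) with hE1def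
  set E₂ : ℝ := ∫ t in m..b, (f t - f x - f' x * (t - x)) with hE2def
  clear_value E₁ E₂
  have haff : ∀ u v : ℝ, (∫ t in u..v, (f x + f' x * (t - x)))
      = f x * (v - u) + f' x * (((v - x) ^ 2 - (u - x) ^ 2) / 2) := by
    intro u v
    rw [intervalIntegral.integral_add (intervalIntegrable_const)
      (((by fun_prop : Continuous fun t : ℝ => f' x * (t - x))).intervalIntegrable u v),
      intervalIntegral.integral_const, smul_eq_mul,
      intervalIntegral.integral_const_mul, int_linear]
    ring
  have hI1 : (∫ t in a..m, f t)
      = E₁ + (f x * (m - a) + f' x * (((m - x) ^ 2 - (a - x) ^ 2) / 2)) := by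
    have h1 : E₁ = (∫ t in a..m, f t) - ∫ t in a..m, (f x + f' x * (t - x)) := by
      rw [hE1def, ← intervalIntegral.integral_sub hIf1 hg1]
      apply intervalIntegral.integral_congr
      intro t _; ring
    rw [haff] at h1; linarith
  have hI2 : (∫ t in m..b, f t)
      = E₂ + (f x * (b - m) + f' x * (((b - x) ^ 2 - (m - x) ^ 2) / 2)) := by
    have h1 : E₂ = (∫ t in m..b, f t) - ∫ t in m..b, (f x + f' x * (t - x)) := by
      rw [hE2def, ← intervalIntegral.integral_sub hIf2 hg2]
      apply intervalIntegral.integral_congr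
      intro t _; ring
    rw [haff] at h1; linarith
  -- key algebraic identity
  have hkey : f x -
      (K * (((j:ℝ) + 1/2) / K - x) * (K * ∫ t in a..m, f t) +
       K * (x - ((j:ℝ) - 1/2) / K) * (K * ∫ t in m..b, f t))
      = -((K * (((j:ℝ) + 1/2) / K - x) * K * E₁)
          + (K * (x - ((j:ℝ) - 1/2) / K) * K * E₂)) := by
    rw [hI1, hI2, ha, hm, hb]
    field_simp
    ring
  rw [hkey, abs_neg]
  -- bounds on the error integrals
  have habs1 : |E₁| ≤ L₀ * ((m - x) ^ 3 - (a - x) ^ 3) / 3 := by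
    have hIG : IntervalIntegrable (fun t => f t - f x - f' x * (t - x)) volume a m :=
      (hIf1.sub intervalIntegrable_const).sub
        (((by fun_prop : Continuous fun t : ℝ => f' x * (t - x))).intervalIntegrable a m)
    calc |E₁| = |∫ t in a..m, (f t - f x - f' x * (t - x))| := by rw [hE1def]
      _ ≤ ∫ t in a..m, |f t - f x - f' x * (t - x)| :=
          intervalIntegral.abs_integral_le_integral_abs ham
      _ ≤ ∫ t in a..m, L₀ * (t - x) ^ 2 := by
          apply intervalIntegral.integral_mono_on ham hIG.abs
            ((continuous_const.mul ((continuous_id.sub continuous_const).pow 2)).intervalIntegrable a m)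
          intro t ht
          exact taylor_aux f f' L₀ hL₀' hderiv hf'cont hLip x t hx01
            (hmem t ht.1 (le_trans ht.2 hmb))
      _ = L₀ * ((m - x) ^ 3 - (a - x) ^ 3) / 3 := by
          rw [intervalIntegral.integral_const_mul, int_sq]; ring
  have habs2 : |E₂| ≤ L₀ * ((b - x) ^ 3 - (m - x) ^ 3) / 3 := by
    have hIG : IntervalIntegrable (fun t => f t - f x - f' x * (t - x)) volume m b :=
      (hIf2.sub intervalIntegrable_const).sub
        (((by fun_prop : Continuous fun t : ℝ => f' x * (t - x))).intervalIntegrable m b)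
    calc |E₂| = |∫ t in m..b, (f t - f x - f' x * (t - x))| := by rw [hE2def]
      _ ≤ ∫ t in m..b, |f t - f x - f' x * (t - x)| :=
          intervalIntegral.abs_integral_le_integral_abs hmb
      _ ≤ ∫ t in m..b, L₀ * (t - x) ^ 2 := by
          apply intervalIntegral.integral_mono_on hmb hIG.abs
            ((continuous_const.mul ((continuous_id.sub continuous_const).pow 2)).intervalIntegrable m b)
          intro t ht
          exact taylor_aux f f' L₀ hL₀' hderiv hf'cont hLip x t hx01
            (hmem t (le_trans ham ht.1) ht.2)
      _ = L₀ * ((b - x) ^ 3 - (m - x) ^ 3) / 3 := by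
          rw [intervalIntegral.integral_const_mul, int_sq]; ring
  -- nonnegativity of the weights
  have hw1 : 0 ≤ K * (((j:ℝ) + 1/2) / K - x) * K :=
    mul_nonneg (mul_nonneg hK0.le (by linarith)) hK0.le
  have hw2 : 0 ≤ K * (x - ((j:ℝ) - 1/2) / K) * K :=
    mul_nonneg (mul_nonneg hK0.le (by linarith)) hK0.le
  -- reparametrize: s := K * x - (j - 1/2)
  set s : ℝ := K * x - ((j:ℝ) - 1/2) with hs
  clear_value s
  have hs0 : 0 ≤ s := by
    rw [hs]
    have := (div_le_iff₀ hK0).mp hx1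
    nlinarith
  have hs1 : s ≤ 1 := by
    rw [hs]
    have := (le_div_iff₀ hK0).mp hx2
    nlinarith
  have ex : x = ((j:ℝ) - 1/2 + s) / K := by rw [hs]; field_simp; ring
  have e1 : ((j:ℝ) + 1/2) / K - x = (1 - s) / K := by rw [ex]; field_simp; ring
  have e2 : x - ((j:ℝ) - 1/2) / K = s / K := by rw [ex]; field_simp; ring
  have em : m - x = (1/2 - s) / K := by rw [ex, hm]; field_simp; ring
  have ea : a - x = (-1/2 - s) / K := by rw [ex, ha]; field_simp; ring
  have eb : b - x = (3/2 - s) / K := by rw [ex, hb]; field_simp; ring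
  have hp := key_poly s hs0 hs1
  calc |K * (((j:ℝ) + 1/2) / K - x) * K * E₁ + K * (x - ((j:ℝ) - 1/2) / K) * K * E₂|
      ≤ (K * (((j:ℝ) + 1/2) / K - x) * K) * |E₁|
        + (K * (x - ((j:ℝ) - 1/2) / K) * K) * |E₂| := by
        calc _ ≤ |K * (((j:ℝ) + 1/2) / K - x) * K * E₁|
            + |K * (x - ((j:ℝ) - 1/2) / K) * K * E₂| := abs_add_le _ _
          _ = _ := by
              rw [abs_mul (K * (((j:ℝ) + 1/2) / K - x) * K) E₁,
                abs_mul (K * (x - ((j:ℝ) - 1/2) / K) * K) E₂,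
                abs_of_nonneg hw1, abs_of_nonneg hw2]
      _ ≤ (K * (((j:ℝ) + 1/2) / K - x) * K) * (L₀ * ((m - x) ^ 3 - (a - x) ^ 3) / 3)
        + (K * (x - ((j:ℝ) - 1/2) / K) * K) * (L₀ * ((b - x) ^ 3 - (m - x) ^ 3) / 3) := by
          gcongr
      _ = L₀ * ((1 - s) * ((1/2 - s) ^ 3 + (1/2 + s) ^ 3)
            + s * ((3/2 - s) ^ 3 - (1/2 - s) ^ 3)) / (3 * K ^ 2) := by
          rw [e1, e2, em, ea, eb]
          field_simp
          ring
      _ ≤ L₀ * (9/8) / (3 * K ^ 2) := by gcongr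
      _ = 3 * L₀ / 8 * ((K : ℝ) ^ 2)⁻¹ := by field_simp; ring
end

section
/- Let f be a continuous density on [0,1] with bounded derivative on (0,1) (hence uniformly continuous). Let h_k and p_k be respectively the k-regular histogram and the k-regular polygon based on f (with bin masses w_j = ∫_{A_{j,k}} f dλ and midpoints c_j = (j−1/2)/k). Then for every x ∈ (0,1), |h_k(x) − p_k(x)| → 0 as k → ∞. Specifically, |h_k(x) − p_k(x)| ≤ k·max_{1≤j≤k−1} ∫_0^{1/k} |f(j/k + t) − f(j/k − t)| dt, which tends to 0 by uniform continuity. -/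
open MeasureTheory intervalIntegral Filter

/-- Mass of `f` on the `j`-th bin of the uniform `k`-partition of `[0,1]`. -/
noncomputable def binMass (f : ℝ → ℝ) (k j : ℕ) : ℝ :=
  ∫ t in (((j:ℝ) - 1) / k)..((j:ℝ) / k), f t

/-- Index of the bin of the uniform `k`-partition containing `x` (bins
`A_1 = [0,1/k]`, `A_j = ((j-1)/k, j/k]`). -/
noncomputable def binIdx (k : ℕ) (x : ℝ) : ℕ := max 1 (Nat.ceil ((k:ℝ) * x))

/-- The `k`-regular histogram with weights `w`. -/
noncomputable def histoVal (k : ℕ) (w : ℕ → ℝ) (x : ℝ) : ℝ := (k:ℝ) * w (binIdx k x)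

/-- The `k`-regular polygon with weights `w`: linear interpolation of the values
`k w_j` at the mid-bin points `c_j = (j-1/2)/k`, constant on `[0,c_1]` and `[c_k,1]`. -/
noncomputable def polyVal (k : ℕ) (w : ℕ → ℝ) (x : ℝ) : ℝ :=
  if x ≤ (1/2) / (k:ℝ) then (k:ℝ) * w 1
  else if ((k:ℝ) - 1/2) / (k:ℝ) ≤ x then (k:ℝ) * w k
  else
    (k:ℝ) * (((min (k-1) (max 1 (Nat.floor ((k:ℝ) * x + 1/2))) : ℕ) + 1/2) / k - x)
        * ((k:ℝ) * w (min (k-1) (max 1 (Nat.floor ((k:ℝ) * x + 1/2)))))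
    + (k:ℝ) * (x - (((min (k-1) (max 1 (Nat.floor ((k:ℝ) * x + 1/2))) : ℕ) - 1/2) / k))
        * ((k:ℝ) * w (min (k-1) (max 1 (Nat.floor ((k:ℝ) * x + 1/2))) + 1))

lemma aux_lip {f f' : ℝ → ℝ} {D : ℝ}
    (hf_cont : ContinuousOn f (Set.Icc (0:ℝ) 1))
    (hderiv : ∀ x ∈ Set.Ioo (0:ℝ) 1, HasDerivAt f (f' x) x)
    (hbdd : ∀ x ∈ Set.Ioo (0:ℝ) 1, |f' x| ≤ D) :
    ∀ a ∈ Set.Icc (0:ℝ) 1, ∀ b ∈ Set.Icc (0:ℝ) 1, |f b - f a| ≤ D * |b - a| := by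
  have key : ∀ a b : ℝ, a ∈ Set.Icc (0:ℝ) 1 → b ∈ Set.Icc (0:ℝ) 1 → a < b →
      |f b - f a| ≤ D * |b - a| := by
    intro a b ha hb hab
    obtain ⟨c, hc, hc'⟩ := exists_hasDerivAt_eq_slope f f' hab
      (hf_cont.mono (Set.Icc_subset_Icc ha.1 hb.2))
      (fun x hx => hderiv x ⟨lt_of_le_of_lt ha.1 hx.1, lt_of_lt_of_le hx.2 hb.2⟩)
    have hcm : c ∈ Set.Ioo (0:ℝ) 1 := ⟨lt_of_le_of_lt ha.1 hc.1, lt_of_lt_of_le hc.2 hb.2⟩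
    have hba : b - a ≠ 0 := sub_ne_zero.2 (ne_of_gt hab)
    have h1 : f b - f a = f' c * (b - a) := by
      field_simp at hc'; linarith [hc']
    rw [h1, abs_mul]
    exact mul_le_mul_of_nonneg_right (hbdd c hcm) (abs_nonneg _)
  intro a ha b hb
  rcases lt_trichotomy a b with h | h | h
  · exact key a b ha hb h
  · simp [h]
  · rw [abs_sub_comm, abs_sub_comm b a]; exact key b a hb ha h

lemma aux_intable {f : ℝ → ℝ} (hf_cont : ContinuousOn f (Set.Icc (0:ℝ) 1))
    {k j : ℕ} (hj1 : 1 ≤ j) (hjk : j + 1 ≤ k) :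
    IntervalIntegrable (fun t => f ((j:ℝ)/k + t)) volume 0 (1/(k:ℝ)) ∧
    IntervalIntegrable (fun t => f ((j:ℝ)/k - t)) volume 0 (1/(k:ℝ)) := by
  have kpos : (0:ℝ) < k := by exact_mod_cast (by omega : 0 < k)
  have hj1' : (1:ℝ) ≤ j := by exact_mod_cast hj1
  have hjk' : (j:ℝ) + 1 ≤ k := by exact_mod_cast hjk
  have huIcc : Set.uIcc (0:ℝ) (1/(k:ℝ)) = Set.Icc 0 (1/(k:ℝ)) :=
    Set.uIcc_of_le (by positivity)
  constructor
  · apply ContinuousOn.intervalIntegrable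
    rw [huIcc]
    apply hf_cont.comp (by fun_prop)
    intro t ht
    constructor
    · have : (0:ℝ) ≤ (j:ℝ)/k := by positivity
      linarith [ht.1]
    · have h1 : (j:ℝ)/k + t ≤ (j:ℝ)/k + 1/k := by linarith [ht.2]
      have h2 : (j:ℝ)/k + 1/k ≤ 1 := by
        rw [← add_div, div_le_one kpos]; linarith
      linarith
  · apply ContinuousOn.intervalIntegrable
    rw [huIcc]
    apply hf_cont.comp (by fun_prop)
    intro t ht
    constructor
    · have h2 : (0:ℝ) ≤ (j:ℝ)/k - 1/k := by
        rw [div_sub_div_same]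
        apply div_nonneg (by linarith) kpos.le
      linarith [ht.2]
    · have : (j:ℝ)/k ≤ 1 := by rw [div_le_one kpos]; linarith
      linarith [ht.1]

lemma aux_mass_sub {f : ℝ → ℝ} (hf_cont : ContinuousOn f (Set.Icc (0:ℝ) 1))
    {k j : ℕ} (hj1 : 1 ≤ j) (hjk : j + 1 ≤ k) :
    |binMass f k j - binMass f k (j+1)|
      ≤ ∫ t in (0:ℝ)..(1/(k:ℝ)), |f ((j:ℝ)/k + t) - f ((j:ℝ)/k - t)| := by
  have kpos : (0:ℝ) < k := by exact_mod_cast (by omega : 0 < k)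
  obtain ⟨hi1, hi2⟩ := aux_intable hf_cont hj1 hjk
  have hL : binMass f k j = ∫ t in (0:ℝ)..(1/(k:ℝ)), f ((j:ℝ)/k - t) := by
    rw [intervalIntegral.integral_comp_sub_left (fun x => f x) ((j:ℝ)/k)]
    unfold binMass
    congr 1
    · rw [sub_div]
    · ring
  have hR : binMass f k (j+1) = ∫ t in (0:ℝ)..(1/(k:ℝ)), f ((j:ℝ)/k + t) := by
    rw [intervalIntegral.integral_comp_add_left (fun x => f x) ((j:ℝ)/k)]
    unfold binMass
    congr 1
    · push_cast; ring
    · push_cast; rw [add_div]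
  rw [hL, hR, ← intervalIntegral.integral_sub hi2 hi1]
  simp_rw [abs_sub_comm (f ((j:ℝ)/k + _))]
  exact intervalIntegral.abs_integral_le_integral_abs (by positivity)

lemma aux_bound (w : ℕ → ℝ) (k : ℕ) (hk : 2 ≤ k) (x : ℝ)
    (hx : x ∈ Set.Icc ((1/2) / (k:ℝ)) (((k:ℝ) - 1/2) / (k:ℝ))) :
    ∃ j : ℕ, 1 ≤ j ∧ j ≤ k - 1 ∧
      |histoVal k w x - polyVal k w x| ≤ (k:ℝ) * |w j - w (j+1)| := by
  have kpos : (0:ℝ) < k := by exact_mod_cast (by omega : 0 < k)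
  have hk2 : (2:ℝ) ≤ k := by exact_mod_cast hk
  have hy1 : (1:ℝ)/2 ≤ (k:ℝ) * x := by
    have := hx.1
    rw [div_le_iff₀ kpos] at this
    linarith [this]
  have hy2 : (k:ℝ) * x ≤ (k:ℝ) - 1/2 := by
    have := hx.2
    rw [le_div_iff₀ kpos] at this
    linarith [this]
  by_cases hc1 : x ≤ (1/2) / (k:ℝ)
  · -- x = c₁, both equal k * w 1
    have hxe : (k:ℝ) * x = 1/2 := by
      have : (k:ℝ) * x ≤ 1/2 := by
        rw [le_div_iff₀ kpos] at hc1; linarith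
      linarith
    have hceil : Nat.ceil ((k:ℝ) * x) = 1 := by
      rw [hxe]; rw [Nat.ceil_eq_iff one_ne_zero]; norm_num
    refine ⟨1, le_rfl, by omega, ?_⟩
    rw [histoVal, polyVal, if_pos hc1, binIdx, hceil]
    simp
    positivity
  · by_cases hc2 : ((k:ℝ) - 1/2) / (k:ℝ) ≤ x
    · -- x = c_k, both equal k * w k
      have hxe : (k:ℝ) * x = (k:ℝ) - 1/2 := by
        rw [div_le_iff₀ kpos] at hc2
        linarith
      have hceil : Nat.ceil ((k:ℝ) * x) = k := by
        rw [hxe, Nat.ceil_eq_iff (by omega)]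
        constructor
        · rw [Nat.cast_sub (by omega)]; push_cast; linarith
        · linarith
      refine ⟨1, le_rfl, by omega, ?_⟩
      rw [histoVal, polyVal, if_neg hc1, if_pos hc2, binIdx, hceil]
      have : max 1 k = k := by omega
      rw [this]
      simp
      positivity
    · -- main case
      have kne : (k:ℝ) ≠ 0 := ne_of_gt kpos
      have hlt1 : (1:ℝ)/2 < (k:ℝ) * x := by
        rw [not_le, div_lt_iff₀ kpos] at hc1; linarith
      have hlt2 : (k:ℝ) * x < (k:ℝ) - 1/2 := by
        rw [not_le, lt_div_iff₀ kpos] at hc2; linarith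
      set m := Nat.floor ((k:ℝ) * x + 1/2) with hm_def
      have hm_le : (m:ℝ) ≤ (k:ℝ)*x + 1/2 := Nat.floor_le (by linarith)
      have hm_lt : (k:ℝ)*x + 1/2 < (m:ℝ) + 1 := Nat.lt_floor_add_one _
      have hm1 : 1 ≤ m := by
        apply Nat.le_floor; push_cast; linarith
      have hmk : m ≤ k - 1 := by
        have : (m:ℝ) < (k:ℝ) := by linarith
        have : m < k := by exact_mod_cast this
        omega
      have hmk' : (m:ℝ) + 1 ≤ (k:ℝ) := by
        have : m + 1 ≤ k := by omega
        exact_mod_cast this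
      have hJ : min (k-1) (max 1 m) = m := by omega
      have hpoly : polyVal k w x
          = (((m:ℝ)+1/2) - (k:ℝ)*x) * ((k:ℝ) * w m)
            + ((k:ℝ)*x - ((m:ℝ)-1/2)) * ((k:ℝ) * w (m+1)) := by
        rw [polyVal, if_neg hc1, if_neg hc2, hJ]
        field_simp
      -- ceiling is m or m+1
      have hceil_le : Nat.ceil ((k:ℝ)*x) ≤ m + 1 := by
        rw [Nat.ceil_le]; push_cast; linarith
      have hceil_ge : m ≤ Nat.ceil ((k:ℝ)*x) := by
        have h0 : (m:ℝ) - 1 < (k:ℝ)*x := by linarith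
        have : (↑(m-1):ℝ) < (k:ℝ)*x := by
          rw [Nat.cast_sub hm1]; push_cast; linarith
        have := Nat.lt_ceil.2 this
        omega
      have hceil_pos : 1 ≤ Nat.ceil ((k:ℝ)*x) := by omega
      have hmax : max 1 (Nat.ceil ((k:ℝ)*x)) = Nat.ceil ((k:ℝ)*x) := by omega
      have hbeta0 : (0:ℝ) ≤ (k:ℝ)*x - ((m:ℝ)-1/2) := by linarith
      have hbeta1 : (k:ℝ)*x - ((m:ℝ)-1/2) ≤ 1 := by linarith
      have halpha0 : (0:ℝ) ≤ ((m:ℝ)+1/2) - (k:ℝ)*x := by linarith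
      have halpha1 : ((m:ℝ)+1/2) - (k:ℝ)*x ≤ 1 := by linarith
      refine ⟨m, hm1, hmk, ?_⟩
      rcases (by omega : Nat.ceil ((k:ℝ)*x) = m ∨ Nat.ceil ((k:ℝ)*x) = m + 1) with hi | hi
      · have hh : histoVal k w x = (k:ℝ) * w m := by
          rw [histoVal, binIdx, hmax, hi]
        have heq : histoVal k w x - polyVal k w x
            = ((k:ℝ)*x - ((m:ℝ)-1/2)) * ((k:ℝ) * (w m - w (m+1))) := by
          rw [hh, hpoly]; ring
        rw [heq, abs_mul]
        have h1 : |(k:ℝ)*x - ((m:ℝ)-1/2)| ≤ 1 := abs_le.2 ⟨by linarith, hbeta1⟩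
        have h2 : |(k:ℝ) * (w m - w (m+1))| = (k:ℝ) * |w m - w (m+1)| := by
          rw [abs_mul, abs_of_pos kpos]
        rw [h2]
        calc |(k:ℝ)*x - ((m:ℝ)-1/2)| * ((k:ℝ) * |w m - w (m+1)|)
            ≤ 1 * ((k:ℝ) * |w m - w (m+1)|) :=
              mul_le_mul_of_nonneg_right h1 (by positivity)
          _ = (k:ℝ) * |w m - w (m+1)| := one_mul _
      · have hh : histoVal k w x = (k:ℝ) * w (m+1) := by
          rw [histoVal, binIdx, hmax, hi]
        have heq : histoVal k w x - polyVal k w x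
            = (((m:ℝ)+1/2) - (k:ℝ)*x) * ((k:ℝ) * (w (m+1) - w m)) := by
          rw [hh, hpoly]; ring
        rw [heq, abs_mul]
        have h1 : |((m:ℝ)+1/2) - (k:ℝ)*x| ≤ 1 := abs_le.2 ⟨by linarith, halpha1⟩
        have h2 : |(k:ℝ) * (w (m+1) - w m)| = (k:ℝ) * |w m - w (m+1)| := by
          rw [abs_mul, abs_of_pos kpos, abs_sub_comm]
        rw [h2]
        calc |((m:ℝ)+1/2) - (k:ℝ)*x| * ((k:ℝ) * |w m - w (m+1)|)
            ≤ 1 * ((k:ℝ) * |w m - w (m+1)|) :=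
              mul_le_mul_of_nonneg_right h1 (by positivity)
          _ = (k:ℝ) * |w m - w (m+1)| := one_mul _

/-- for a continuous density with bounded derivative on `(0,1)`,
the histogram and the polygon based on `f` agree asymptotically at every
`x ∈ (0,1)`; moreover `|h_k(x) - p_k(x)|` is bounded by
`k · max_j ∫₀^{1/k} |f(j/k + t) - f(j/k - t)| dt` on `[c₁, c_k]`. -/
theorem histogram_polygon_pointwise
    (f f' : ℝ → ℝ) (D : ℝ)
    (hf_cont : ContinuousOn f (Set.Icc (0:ℝ) 1))
    (hf0 : ∀ x ∈ Set.Icc (0:ℝ) 1, 0 ≤ f x)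
    (hf1 : ∫ x in (0:ℝ)..1, f x = 1)
    (hderiv : ∀ x ∈ Set.Ioo (0:ℝ) 1, HasDerivAt f (f' x) x)
    (hbdd : ∀ x ∈ Set.Ioo (0:ℝ) 1, |f' x| ≤ D) :
    (∀ x ∈ Set.Ioo (0:ℝ) 1,
      Tendsto (fun k : ℕ => |histoVal k (binMass f k) x - polyVal k (binMass f k) x|)
        atTop (nhds 0))
    ∧ ∀ k : ℕ, ∀ hk : 2 ≤ k,
        ∀ x ∈ Set.Icc ((1/2) / (k:ℝ)) (((k:ℝ) - 1/2) / (k:ℝ)),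
          |histoVal k (binMass f k) x - polyVal k (binMass f k) x|
            ≤ (k:ℝ) * (Finset.Icc 1 (k-1)).sup'
                (by simpa using Finset.nonempty_Icc.2 (by omega))
                (fun j => ∫ t in (0:ℝ)..(1 / (k:ℝ)),
                  |f ((j:ℝ) / k + t) - f ((j:ℝ) / k - t)|) := by
  have hlip := aux_lip hf_cont hderiv hbdd
  have hD : 0 ≤ D := le_trans (abs_nonneg _) (hbdd (1/2) (by norm_num))
  have key : ∀ k : ℕ, ∀ hk : 2 ≤ k,
      ∀ x ∈ Set.Icc ((1/2) / (k:ℝ)) (((k:ℝ) - 1/2) / (k:ℝ)),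
        |histoVal k (binMass f k) x - polyVal k (binMass f k) x|
          ≤ (k:ℝ) * (Finset.Icc 1 (k-1)).sup'
              (by simpa using Finset.nonempty_Icc.2 (by omega))
              (fun j => ∫ t in (0:ℝ)..(1 / (k:ℝ)),
                |f ((j:ℝ) / k + t) - f ((j:ℝ) / k - t)|) := by
    intro k hk x hx
    obtain ⟨j, hj1, hjk, hle⟩ := aux_bound (binMass f k) k hk x hx
    refine hle.trans (mul_le_mul_of_nonneg_left ?_ (Nat.cast_nonneg k))
    refine (aux_mass_sub hf_cont hj1 (by omega)).trans ?_
    exact Finset.le_sup' (fun i : ℕ => ∫ t in (0:ℝ)..(1 / (k:ℝ)),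
      |f ((i:ℝ) / k + t) - f ((i:ℝ) / k - t)|) (Finset.mem_Icc.2 ⟨hj1, hjk⟩)
  have hint : ∀ k : ℕ, 2 ≤ k → ∀ j : ℕ, 1 ≤ j → j ≤ k - 1 →
      (∫ t in (0:ℝ)..(1/(k:ℝ)), |f ((j:ℝ)/k + t) - f ((j:ℝ)/k - t)|) ≤ D / (k:ℝ)^2 := by
    intro k hk j hj1 hjk
    have kpos : (0:ℝ) < k := by exact_mod_cast (by omega : 0 < k)
    have hjk' : j + 1 ≤ k := by omega
    have hj1' : (1:ℝ) ≤ j := by exact_mod_cast hj1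
    have hjk'' : (j:ℝ) + 1 ≤ k := by exact_mod_cast hjk'
    have hmem : ∀ t ∈ Set.Icc (0:ℝ) (1/(k:ℝ)),
        ((j:ℝ)/k + t) ∈ Set.Icc (0:ℝ) 1 ∧ ((j:ℝ)/k - t) ∈ Set.Icc (0:ℝ) 1 := by
      intro t ht
      have h1 : (0:ℝ) ≤ (j:ℝ)/k := by positivity
      have h2 : (j:ℝ)/k + 1/k ≤ 1 := by
        rw [← add_div, div_le_one kpos]; linarith
      have h3 : (0:ℝ) ≤ (j:ℝ)/k - 1/k := by
        rw [div_sub_div_same]; exact div_nonneg (by linarith) kpos.le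
      have h4 : (j:ℝ)/k ≤ 1 := by rw [div_le_one kpos]; linarith
      exact ⟨⟨by linarith [ht.1], by linarith [ht.2]⟩,
             ⟨by linarith [ht.2], by linarith [ht.1]⟩⟩
    have hb : ∀ t ∈ Set.Icc (0:ℝ) (1/(k:ℝ)),
        |f ((j:ℝ)/k + t) - f ((j:ℝ)/k - t)| ≤ 2*D*t := by
      intro t ht
      have h := hlip _ (hmem t ht).2 _ (hmem t ht).1
      have he : ((j:ℝ)/k + t) - ((j:ℝ)/k - t) = 2*t := by ring
      rw [he] at h
      have h2 : |2*t| = 2*t := abs_of_nonneg (by linarith [ht.1])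
      rw [h2] at h
      linarith
    have hInt1 : IntervalIntegrable
        (fun t => |f ((j:ℝ)/k + t) - f ((j:ℝ)/k - t)|) volume 0 (1/(k:ℝ)) :=
      ((aux_intable hf_cont hj1 hjk').1.sub (aux_intable hf_cont hj1 hjk').2).abs
    have hInt2 : IntervalIntegrable (fun t : ℝ => 2*D*t) volume 0 (1/(k:ℝ)) :=
      ((continuous_const.mul continuous_id').intervalIntegrable 0 (1/(k:ℝ)))
    have hmono := intervalIntegral.integral_mono_on (by positivity) hInt1 hInt2 hb
    have hval : (∫ t in (0:ℝ)..(1/(k:ℝ)), 2*D*t) = D / (k:ℝ)^2 := by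
      have h0 : (fun t : ℝ => 2*D*t) = fun t : ℝ => (2*D) * t := rfl
      rw [h0, intervalIntegral.integral_const_mul, integral_id]
      field_simp
      ring
    calc (∫ t in (0:ℝ)..(1/(k:ℝ)), |f ((j:ℝ)/k + t) - f ((j:ℝ)/k - t)|)
        ≤ ∫ t in (0:ℝ)..(1/(k:ℝ)), 2*D*t := hmono
      _ = D / (k:ℝ)^2 := hval
  refine ⟨?_, key⟩
  intro x hx
  have htend : Tendsto (fun k:ℕ => (1:ℝ)/2/(k:ℝ)) atTop (nhds 0) :=
    tendsto_const_div_atTop_nhds_zero_nat (1/2)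
  have hev1 : ∀ᶠ k:ℕ in atTop, (1:ℝ)/2/(k:ℝ) < x := htend.eventually_lt_const hx.1
  have hev2 : ∀ᶠ k:ℕ in atTop, (1:ℝ)/2/(k:ℝ) < 1 - x :=
    htend.eventually_lt_const (by linarith [hx.2])
  have hev3 : ∀ᶠ k:ℕ in atTop, 2 ≤ k := eventually_ge_atTop 2
  apply squeeze_zero' (g := fun k:ℕ => D/(k:ℝ))
  · exact Eventually.of_forall (fun k => abs_nonneg _)
  · filter_upwards [hev1, hev2, hev3] with k hk1 hk2 hk3
    have kpos : (0:ℝ) < k := by exact_mod_cast (by omega : 0 < k)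
    have kne : (k:ℝ) ≠ 0 := ne_of_gt kpos
    have hxm : x ∈ Set.Icc ((1/2) / (k:ℝ)) (((k:ℝ) - 1/2) / (k:ℝ)) := by
      constructor
      · exact le_of_lt hk1
      · have heq : ((k:ℝ) - 1/2) / (k:ℝ) = 1 - (1:ℝ)/2/(k:ℝ) := by
          field_simp
        rw [heq]; linarith
    refine (key k hk3 x hxm).trans ?_
    have hsup : (Finset.Icc 1 (k-1)).sup'
        (by simpa using Finset.nonempty_Icc.2 (by omega))
        (fun j => ∫ t in (0:ℝ)..(1 / (k:ℝ)),
          |f ((j:ℝ) / k + t) - f ((j:ℝ) / k - t)|) ≤ D / (k:ℝ)^2 := by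
      apply Finset.sup'_le
      intro j hj
      rw [Finset.mem_Icc] at hj
      exact hint k hk3 j hj.1 hj.2
    have h2 : (k:ℝ) * (D/(k:ℝ)^2) = D/(k:ℝ) := by field_simp
    exact le_trans (mul_le_mul_of_nonneg_left hsup kpos.le) (le_of_eq h2)
  · exact tendsto_const_div_atTop_nhds_zero_nat D
end
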